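/- arXiv:2504.21439 — 3 statements merged into one kernel-verified Lean document; each statement's English description precedes it below -/
import Mathlib

section
/- For all n ≥ 0, R̄_{4,3}(12n+7) ≡ 0 (mod 8). -/
/-- Number of overpartitions of `n` in which no part is divisible by `l` or by `m`
(an overpartition is a partition where the first occurrence of each part size may be
overlined, so each partition contributes `2 ^ (number of distinct part sizes)`). -/
def Rbar (l m n : ℕ) : ℕ :=
  ∑ p : Nat.Partition n,
    if ∀ i ∈ p.parts, ¬ l ∣ i ∧ ¬ m ∣ i then 2 ^ p.parts.toFinset.card else 0

namespace RbarAux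

open Finset

/-- allowed part sizes -/
def ok (a : ℕ) : Prop := ¬ 4 ∣ a ∧ ¬ 3 ∣ a

instance : DecidablePred ok := fun a => by unfold ok; infer_instance

lemma ok_pos {a : ℕ} (h : ok a) : 0 < a := by
  rcases Nat.eq_zero_or_pos a with rfl | h'
  · exact absurd (dvd_zero 3) h.2
  · exact h'

lemma ok_of_dvd {N a : ℕ} (hN : N % 12 = 7) (h : a ∣ N) : ok a := by
  constructor
  · intro h4; have := h4.trans h; omega
  · intro h3; have := h3.trans h; omega

/-- quadruples (a,i,b,j) with a,b allowed, i,j ≥ 1, a*i + b*j = N -/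
def PP (N : ℕ) : Finset (ℕ × ℕ × ℕ × ℕ) :=
  ((range (N+1)) ×ˢ (range (N+1)) ×ˢ (range (N+1)) ×ˢ (range (N+1))).filter
    fun q => ok q.1 ∧ ok q.2.2.1 ∧ 1 ≤ q.2.1 ∧ 1 ≤ q.2.2.2 ∧
      q.1 * q.2.1 + q.2.2.1 * q.2.2.2 = N

lemma mem_PP {N : ℕ} {q : ℕ × ℕ × ℕ × ℕ} :
    q ∈ PP N ↔ ok q.1 ∧ ok q.2.2.1 ∧ 1 ≤ q.2.1 ∧ 1 ≤ q.2.2.2 ∧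
      q.1 * q.2.1 + q.2.2.1 * q.2.2.2 = N := by
  obtain ⟨a, i, b, j⟩ := q
  simp only [PP, mem_filter, mem_product, mem_range]
  constructor
  · tauto
  · rintro ⟨ha, hb, hi, hj, hsum⟩
    have h1 : a * i ≤ N := by omega
    have h2 : b * j ≤ N := by omega
    have ha0 := ok_pos ha; have hb0 := ok_pos hb
    have : a ≤ a * i := Nat.le_mul_of_pos_right a hi
    have : i ≤ a * i := Nat.le_mul_of_pos_left i ha0
    have : b ≤ b * j := Nat.le_mul_of_pos_right b hj
    have : j ≤ b * j := Nat.le_mul_of_pos_left j hb0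
    exact ⟨⟨by omega, by omega, by omega, by omega⟩, ha, hb, hi, hj, hsum⟩

/-- swap the two halves -/
def swap (q : ℕ × ℕ × ℕ × ℕ) : ℕ × ℕ × ℕ × ℕ := (q.2.2.1, q.2.2.2, q.1, q.2.1)

/-- toggle: on the half with even product, exchange odd/even first component
keeping the product -/
def tog (q : ℕ × ℕ × ℕ × ℕ) : ℕ × ℕ × ℕ × ℕ :=
  if 2 ∣ q.1 * q.2.1 then
    (if 2 ∣ q.1 then (q.1/2, 2*q.2.1, q.2.2.1, q.2.2.2)
     else (2*q.1, q.2.1/2, q.2.2.1, q.2.2.2))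
  else
    (if 2 ∣ q.2.2.1 then (q.1, q.2.1, q.2.2.1/2, 2*q.2.2.2)
     else (q.1, q.2.1, 2*q.2.2.1, q.2.2.2/2))

lemma ok_half {a : ℕ} (h : ok a) (h2 : 2 ∣ a) : ok (a/2) := by
  obtain ⟨c, rfl⟩ := h2
  rw [Nat.mul_div_cancel_left c (by norm_num)]
  obtain ⟨h4, h3⟩ := h
  constructor
  · intro hc; exact h4 (by omega)
  · intro hc; exact h3 (by omega)

lemma ok_double {a : ℕ} (h : ok a) (h2 : ¬ 2 ∣ a) : ok (2*a) := by
  obtain ⟨h4, h3⟩ := h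
  constructor
  · intro hc; omega
  · intro hc; exact h3 (by omega)

/-- the even half of PP -/
def PE (N : ℕ) : Finset (ℕ × ℕ × ℕ × ℕ) := (PP N).filter fun q => 2 ∣ q.1 * q.2.1

lemma two_dvd_right {a i : ℕ} (h2a : ¬ 2 ∣ a) (hev : 2 ∣ a * i) : 2 ∣ i := by
  rcases Nat.even_or_odd i with h | h
  · obtain ⟨c, rfl⟩ := h; exact ⟨c, by ring⟩
  · exfalso
    have ha : Odd a := Nat.odd_iff.mpr (by omega)
    have hodd : Odd (a * i) := ha.mul h
    rw [Nat.odd_iff] at hodd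
    omega

lemma tog_eval_a {a i b j : ℕ} (hev : 2 ∣ a * i) (h2a : 2 ∣ a) :
    tog (a, i, b, j) = (a/2, 2*i, b, j) := by
  simp [tog, hev, h2a]

lemma tog_eval_i {a i b j : ℕ} (hev : 2 ∣ a * i) (h2a : ¬ 2 ∣ a) :
    tog (a, i, b, j) = (2*a, i/2, b, j) := by
  simp [tog, hev, h2a]

lemma tog_mem_PE {N : ℕ} (hN2 : N % 2 = 1) {q : ℕ × ℕ × ℕ × ℕ} (hq : q ∈ PE N) :
    tog q ∈ PE N := by
  obtain ⟨a, i, b, j⟩ := q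
  rw [PE, mem_filter] at hq ⊢
  obtain ⟨hP, hev⟩ := hq
  rw [mem_PP] at hP
  obtain ⟨ha, hb, hi, hj, hsum⟩ := hP
  simp only at ha hb hi hj hsum hev
  by_cases h2a : 2 ∣ a
  · rw [tog_eval_a hev h2a]
    have hprod : a / 2 * (2 * i) = a * i := by
      obtain ⟨c, rfl⟩ := h2a
      rw [Nat.mul_div_cancel_left c (by norm_num)]; ring
    refine ⟨mem_PP.mpr ⟨ok_half ha h2a, hb, ?_, hj, ?_⟩, ?_⟩
    · show 1 ≤ 2 * i; omega
    · show a / 2 * (2 * i) + b * j = N; rw [hprod]; exact hsum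
    · show 2 ∣ a / 2 * (2 * i); rw [hprod]; exact hev
  · rw [tog_eval_i hev h2a]
    have h2i : 2 ∣ i := two_dvd_right h2a hev
    have hprod : 2 * a * (i / 2) = a * i := by
      obtain ⟨c, rfl⟩ := h2i
      rw [Nat.mul_div_cancel_left c (by norm_num)]; ring
    refine ⟨mem_PP.mpr ⟨ok_double ha h2a, hb, ?_, hj, ?_⟩, ?_⟩
    · show 1 ≤ i / 2; omega
    · show 2 * a * (i / 2) + b * j = N; rw [hprod]; exact hsum
    · show 2 ∣ 2 * a * (i / 2); rw [hprod]; exact hev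

lemma tog_tog_PE {N : ℕ} {q : ℕ × ℕ × ℕ × ℕ} (hq : q ∈ PE N) :
    tog (tog q) = q := by
  obtain ⟨a, i, b, j⟩ := q
  rw [PE, mem_filter, mem_PP] at hq
  obtain ⟨⟨ha, hb, hi, hj, hsum⟩, hev⟩ := hq
  simp only at ha hb hi hj hsum hev
  have ha0 := ok_pos ha
  by_cases h2a : 2 ∣ a
  · rw [tog_eval_a hev h2a]
    have h4a := ha.1
    have hodd : ¬ 2 ∣ (a / 2) := by
      intro hc; exact h4a (by omega)
    have hev2 : 2 ∣ a / 2 * (2 * i) := ⟨(a/2) * i, by ring⟩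
    rw [tog_eval_i hev2 hodd]
    rw [show 2 * (a / 2) = a by omega, show 2 * i / 2 = i by omega]
  · rw [tog_eval_i hev h2a]
    have h2i : 2 ∣ i := two_dvd_right h2a hev
    have hev2 : 2 ∣ 2 * a * (i / 2) := ⟨a * (i/2), by ring⟩
    have h2a2 : 2 ∣ 2 * a := ⟨a, rfl⟩
    rw [tog_eval_a hev2 h2a2]
    rw [show 2 * a / 2 = a by omega, show 2 * (i / 2) = i by omega]

lemma tog_ne_PE {N : ℕ} {q : ℕ × ℕ × ℕ × ℕ} (hq : q ∈ PE N) :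
    tog q ≠ q := by
  obtain ⟨a, i, b, j⟩ := q
  rw [PE, mem_filter, mem_PP] at hq
  obtain ⟨⟨ha, hb, hi, hj, hsum⟩, hev⟩ := hq
  simp only at ha hb hi hj hsum hev
  have ha0 := ok_pos ha
  by_cases h2a : 2 ∣ a
  · rw [tog_eval_a hev h2a]
    intro hc
    have : a / 2 = a := congrArg Prod.fst hc
    omega
  · rw [tog_eval_i hev h2a]
    intro hc
    have : 2 * a = a := congrArg Prod.fst hc
    omega

lemma even_card_PE {N : ℕ} (hN2 : N % 2 = 1) : 2 ∣ (PE N).card := by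
  rw [← ZMod.natCast_eq_zero_iff]
  have : ((PE N).card : ZMod 2) = ∑ _x ∈ PE N, (1 : ZMod 2) := by
    simp
  rw [this]
  exact Finset.sum_involution (fun q _ => tog q)
    (fun q hq => by decide)
    (fun q hq _ => tog_ne_PE hq)
    (fun q hq => tog_mem_PE hN2 hq)
    (fun q hq => tog_tog_PE hq)

lemma card_PP_eq {N : ℕ} (hN2 : N % 2 = 1) : (PP N).card = 2 * (PE N).card := by
  have hsplit : (PE N).card + ((PP N).filter fun q => ¬ 2 ∣ q.1 * q.2.1).card
      = (PP N).card :=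
    Finset.card_filter_add_card_filter_not _
  have hbij : ((PP N).filter fun q => ¬ 2 ∣ q.1 * q.2.1).card = (PE N).card := by
    apply Finset.card_nbij' swap swap
    · intro q hq
      obtain ⟨a, i, b, j⟩ := q
      rw [mem_coe, mem_filter, mem_PP] at hq
      obtain ⟨⟨ha, hb, hi, hj, hsum⟩, hodd⟩ := hq
      simp only at ha hb hi hj hsum hodd
      rw [mem_coe, PE, mem_filter, mem_PP, swap]
      refine ⟨⟨hb, ha, hj, ?_, ?_⟩, ?_⟩
      · show 1 ≤ i; exact hi
      · show b * j + a * i = N; omega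
      · show 2 ∣ b * j; omega
    · intro q hq
      obtain ⟨a, i, b, j⟩ := q
      rw [mem_coe, PE, mem_filter, mem_PP] at hq
      obtain ⟨⟨ha, hb, hi, hj, hsum⟩, hev⟩ := hq
      simp only at ha hb hi hj hsum hev
      rw [mem_coe, mem_filter, mem_PP, swap]
      refine ⟨⟨hb, ha, hj, ?_, ?_⟩, ?_⟩
      · show 1 ≤ i; exact hi
      · show b * j + a * i = N; omega
      · show ¬ 2 ∣ b * j; omega
    · intro q _; rfl
    · intro q _; rfl
  omega

lemma four_dvd_card_PP {N : ℕ} (hN2 : N % 2 = 1) : 4 ∣ (PP N).card := by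
  obtain ⟨k, hk⟩ := even_card_PE (N := N) hN2
  rw [card_PP_eq hN2, hk]
  exact ⟨k, by ring⟩

/-- quadruples with a < b -/
def QQ (N : ℕ) : Finset (ℕ × ℕ × ℕ × ℕ) := (PP N).filter fun q => q.1 < q.2.2.1

/-- diagonal quadruples -/
def DD (N : ℕ) : Finset (ℕ × ℕ × ℕ × ℕ) := (PP N).filter fun q => q.1 = q.2.2.1

lemma card_PP_split (N : ℕ) : (PP N).card = 2 * (QQ N).card + (DD N).card := by
  have h1 : (QQ N).card + ((PP N).filter fun q => ¬ q.1 < q.2.2.1).card = (PP N).card :=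
    Finset.card_filter_add_card_filter_not _
  have h2 : (((PP N).filter fun q => ¬ q.1 < q.2.2.1).filter fun q => q.1 = q.2.2.1).card
      + (((PP N).filter fun q => ¬ q.1 < q.2.2.1).filter fun q => ¬ q.1 = q.2.2.1).card
      = ((PP N).filter fun q => ¬ q.1 < q.2.2.1).card :=
    Finset.card_filter_add_card_filter_not _
  have h3 : ((PP N).filter fun q => ¬ q.1 < q.2.2.1).filter (fun q => q.1 = q.2.2.1)
      = DD N := by
    rw [Finset.filter_filter, DD]
    apply Finset.filter_congr
    intro q _
    constructor
    · rintro ⟨_, h⟩; exact h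
    · intro h; exact ⟨by omega, h⟩
  have h4 : (((PP N).filter fun q => ¬ q.1 < q.2.2.1).filter fun q => ¬ q.1 = q.2.2.1).card
      = (QQ N).card := by
    rw [Finset.filter_filter]
    apply Finset.card_nbij' swap swap
    · intro q hq
      obtain ⟨a, i, b, j⟩ := q
      rw [mem_coe, mem_filter, mem_PP] at hq
      obtain ⟨⟨ha, hb, hi, hj, hsum⟩, hgt⟩ := hq
      simp only at ha hb hi hj hsum hgt
      rw [mem_coe, QQ, mem_filter, mem_PP, swap]
      refine ⟨⟨hb, ha, hj, ?_, ?_⟩, ?_⟩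
      · show 1 ≤ i; exact hi
      · show b * j + a * i = N; omega
      · show b < a; omega
    · intro q hq
      obtain ⟨a, i, b, j⟩ := q
      rw [mem_coe, QQ, mem_filter, mem_PP] at hq
      obtain ⟨⟨ha, hb, hi, hj, hsum⟩, hlt⟩ := hq
      simp only at ha hb hi hj hsum hlt
      rw [mem_coe, mem_filter, mem_PP, swap]
      refine ⟨⟨hb, ha, hj, ?_, ?_⟩, ?_⟩
      · show 1 ≤ i; exact hi
      · show b * j + a * i = N; omega
      · show ¬ b < a ∧ ¬ b = a; omega
    · intro q _; rfl
    · intro q _; rfl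
  rw [h3] at h2
  omega

lemma card_DD (N : ℕ) (hN : N % 12 = 7) :
    (DD N).card = ∑ d ∈ N.divisors, (N / d - 1) := by
  have hN0 : N ≠ 0 := by omega
  have key : (N.divisors.sigma fun d => Finset.Ico 1 (N / d)).card = (DD N).card := by
    apply Finset.card_bij (fun x _ => (x.1, x.2, x.1, N / x.1 - x.2))
    · rintro ⟨d, i⟩ hx
      dsimp only
      rw [Finset.mem_sigma, Nat.mem_divisors, Finset.mem_Ico] at hx
      obtain ⟨⟨hdvd, -⟩, hi1, hi2⟩ := hx
      dsimp only at hi1 hi2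
      have hd0 : 0 < d := Nat.pos_of_dvd_of_pos hdvd (by omega)
      rw [DD, mem_filter, mem_PP]
      refine ⟨⟨ok_of_dvd hN hdvd, ok_of_dvd hN hdvd, hi1, ?_, ?_⟩, rfl⟩
      · show 1 ≤ N / d - i; omega
      show d * i + d * (N / d - i) = N
      have : d * (N / d) = N := Nat.mul_div_cancel' hdvd
      have h2 : i + (N / d - i) = N / d := by omega
      calc d * i + d * (N / d - i) = d * (i + (N / d - i)) := by ring
        _ = d * (N / d) := by rw [h2]
        _ = N := this
    · rintro ⟨d1, i1⟩ h1 ⟨d2, i2⟩ h2 heq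
      simp only [Prod.mk.injEq] at heq
      obtain ⟨h1', h2', _, _⟩ := heq
      subst h1'; subst h2'; rfl
    · rintro ⟨a, i, b, j⟩ hq
      rw [DD, mem_filter, mem_PP] at hq
      obtain ⟨⟨ha, hb, hi, hj, hsum⟩, hab⟩ := hq
      simp only at ha hb hi hj hsum hab
      subst hab
      have ha0 := ok_pos ha
      have hdvd : a ∣ N := ⟨i + j, by rw [← hsum]; ring⟩
      have hij : i + j = N / a := by
        have h : a * (i + j) = N := by rw [← hsum]; ring
        exact (Nat.div_eq_of_eq_mul_left ha0 (by rw [← h]; ring)).symm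
      refine ⟨⟨a, i⟩, ?_, ?_⟩
      · rw [Finset.mem_sigma, Nat.mem_divisors, Finset.mem_Ico]
        dsimp only
        exact ⟨⟨hdvd, hN0⟩, hi, by omega⟩
      · dsimp only
        have hji : N / a - i = j := by omega
        rw [hji]
  rw [← key, Finset.card_sigma]
  apply Finset.sum_congr rfl
  intro d hd
  rw [Nat.card_Ico]

lemma divisors_odd {N d : ℕ} (hN : N % 12 = 7) (hd : d ∈ N.divisors) : d % 2 = 1 := by
  rw [Nat.mem_divisors] at hd
  rcases Nat.even_or_odd d with h | h
  · exfalso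
    obtain ⟨c, hc⟩ := h
    have h2 : 2 ∣ N := dvd_trans ⟨c, by omega⟩ hd.1
    omega
  · exact Nat.odd_iff.mp h

lemma div_add_self_mod_four {N d : ℕ} (hN : N % 12 = 7) (hd : d ∈ N.divisors) :
    (d + N / d) % 4 = 0 := by
  have hdd := hd
  rw [Nat.mem_divisors] at hdd
  obtain ⟨hdvd, hN0⟩ := hdd
  have he : d * (N / d) = N := Nat.mul_div_cancel' hdvd
  set e := N / d with hedef
  have hdo : d % 2 = 1 := divisors_odd hN hd
  have heo : e % 2 = 1 := by
    have : e ∣ N := Nat.div_dvd_of_dvd hdvd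
    exact divisors_odd hN (Nat.mem_divisors.mpr ⟨this, hN0⟩)
  have hN4 : N % 4 = 3 := by omega
  have hmod : d % 4 * (e % 4) % 4 = 3 := by
    rw [← Nat.mul_mod, he, hN4]
  have hd4 : d % 4 = 1 ∨ d % 4 = 3 := by omega
  have he4 : e % 4 = 1 ∨ e % 4 = 3 := by omega
  rcases hd4 with h1 | h1 <;> rcases he4 with h2 | h2 <;>
    rw [h1, h2] at hmod <;> simp at hmod <;> omega

lemma not_div_self {N d : ℕ} (hN : N % 12 = 7) (hd : d ∈ N.divisors) : N / d ≠ d := by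
  intro hc
  rw [Nat.mem_divisors] at hd
  obtain ⟨hdvd, hN0⟩ := hd
  have he : d * (N / d) = N := Nat.mul_div_cancel' hdvd
  rw [hc] at he
  have h4 : N % 4 = 3 := by omega
  have : d % 4 = 0 ∨ d % 4 = 1 ∨ d % 4 = 2 ∨ d % 4 = 3 := by omega
  have hmod : d % 4 * (d % 4) % 4 = 3 := by rw [← Nat.mul_mod, he, h4]
  rcases this with h | h | h | h <;> rw [h] at hmod <;> simp at hmod

lemma mem_div_divisors {N d : ℕ} (hd : d ∈ N.divisors) : N / d ∈ N.divisors := by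
  rw [Nat.mem_divisors] at hd ⊢
  exact ⟨Nat.div_dvd_of_dvd hd.1, hd.2⟩

lemma four_dvd_sigma {N : ℕ} (hN : N % 12 = 7) : 4 ∣ ∑ d ∈ N.divisors, N / d := by
  rw [← ZMod.natCast_eq_zero_iff, Nat.cast_sum]
  refine Finset.sum_involution (fun d _ => N / d) ?_ ?_ ?_ ?_
  · intro d hd
    have h4 : (d + N / d) % 4 = 0 := div_add_self_mod_four hN hd
    have hdvd : (4 : ℕ) ∣ (N / d + N / (N / d)) := by
      rw [Nat.div_div_self (Nat.mem_divisors.mp hd).1 (Nat.mem_divisors.mp hd).2]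
      omega
    calc ((N / d : ℕ) : ZMod 4) + ((N / (N / d) : ℕ) : ZMod 4)
        = ((N / d + N / (N / d) : ℕ) : ZMod 4) := by push_cast; ring
      _ = 0 := by rw [ZMod.natCast_eq_zero_iff]; exact hdvd
  · intro d hd _; exact not_div_self hN hd
  · intro d hd; exact mem_div_divisors hd
  · intro d hd
    exact Nat.div_div_self (Nat.mem_divisors.mp hd).1 (Nat.mem_divisors.mp hd).2

lemma two_dvd_card_divisors {N : ℕ} (hN : N % 12 = 7) : 2 ∣ N.divisors.card := by
  rw [← ZMod.natCast_eq_zero_iff]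
  have : (N.divisors.card : ZMod 2) = ∑ _d ∈ N.divisors, (1 : ZMod 2) := by simp
  rw [this]
  refine Finset.sum_involution (fun d _ => N / d) (fun _ _ => by decide)
    (fun d hd _ => not_div_self hN hd) (fun d hd => mem_div_divisors hd) ?_
  intro d hd
  exact Nat.div_div_self (Nat.mem_divisors.mp hd).1 (Nat.mem_divisors.mp hd).2

lemma sum_DD (N : ℕ) (hN : N % 12 = 7) :
    (DD N).card + N.divisors.card = ∑ d ∈ N.divisors, N / d := by
  rw [card_DD N hN, Finset.card_eq_sum_ones, ← Finset.sum_add_distrib]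
  apply Finset.sum_congr rfl
  intro d hd
  have hdvd := (Nat.mem_divisors.mp hd).1
  have hd0 : 0 < d := Nat.pos_of_mem_divisors hd
  have hm : d * (N / d) = N := Nat.mul_div_cancel' hdvd
  have h1 : 1 ≤ N / d := by
    rcases Nat.eq_zero_or_pos (N / d) with h | h
    · rw [h, mul_zero] at hm; omega
    · exact h
  omega

/-! ### The partition side -/

/-- build a partition from a quadruple -/
def mkPart (N : ℕ) (q : ℕ × ℕ × ℕ × ℕ) (hq : q ∈ QQ N) : Nat.Partition N where
  parts := Multiset.replicate q.2.1 q.1 + Multiset.replicate q.2.2.2 q.2.2.1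
  parts_pos := by
    intro x hx
    have hq' := (Finset.mem_filter.mp hq).1
    rw [mem_PP] at hq'
    rcases Multiset.mem_add.mp hx with h | h <;> rw [Multiset.eq_of_mem_replicate h]
    · exact ok_pos hq'.1
    · exact ok_pos hq'.2.1
  parts_sum := by
    have hq' := (Finset.mem_filter.mp hq).1
    rw [mem_PP] at hq'
    rw [Multiset.sum_add, Multiset.sum_replicate, Multiset.sum_replicate,
      smul_eq_mul, smul_eq_mul, mul_comm q.2.1 q.1, mul_comm q.2.2.2 q.2.2.1]
    exact hq'.2.2.2.2

lemma card_one (N : ℕ) (hN : N % 12 = 7) :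
    N.divisors.card
      = (Finset.univ.filter fun p : Nat.Partition N => p.parts.toFinset.card = 1).card := by
  have hN0 : N ≠ 0 := by omega
  apply Finset.card_bij (fun d hd =>
    (⟨Multiset.replicate (N / d) d,
      fun hx => by rw [Multiset.eq_of_mem_replicate hx]; exact Nat.pos_of_mem_divisors hd,
      by rw [Multiset.sum_replicate, smul_eq_mul, Nat.div_mul_cancel (Nat.mem_divisors.mp hd).1]⟩
      : Nat.Partition N))
  · intro d hd
    rw [Finset.mem_filter]
    refine ⟨Finset.mem_univ _, ?_⟩
    have hpos : N / d ≠ 0 := by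
      have hdvd := (Nat.mem_divisors.mp hd).1
      have : d * (N / d) = N := Nat.mul_div_cancel' hdvd
      intro hc; rw [hc] at this; omega
    simp [Multiset.toFinset_replicate, hpos]
  · intro d1 h1 d2 h2 heq
    have heq' : Multiset.replicate (N / d1) d1 = Multiset.replicate (N / d2) d2 := by
      exact congrArg Nat.Partition.parts heq
    have hpos : N / d1 ≠ 0 := by
      have hdvd := (Nat.mem_divisors.mp h1).1
      have : d1 * (N / d1) = N := Nat.mul_div_cancel' hdvd
      intro hc; rw [hc] at this; omega
    have : d1 ∈ Multiset.replicate (N / d2) d2 := by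
      rw [← heq']; exact Multiset.mem_replicate.mpr ⟨hpos, rfl⟩
    exact (Multiset.eq_of_mem_replicate this)
  · intro p hp
    rw [Finset.mem_filter] at hp
    obtain ⟨-, hp1⟩ := hp
    obtain ⟨a, ha⟩ := Finset.card_eq_one.mp hp1
    have hall : ∀ b ∈ p.parts, b = a := by
      intro b hb
      have : b ∈ p.parts.toFinset := Multiset.mem_toFinset.mpr hb
      rw [ha] at this
      exact Finset.mem_singleton.mp this
    have hrep : p.parts = Multiset.replicate (Multiset.card p.parts) a :=
      Multiset.eq_replicate_card.mpr hall
    have hsum : Multiset.card p.parts * a = N := by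
      have := p.parts_sum
      rw [hrep, Multiset.sum_replicate, smul_eq_mul] at this
      exact this
    have ha0 : 0 < a := by
      have hane : a ∈ p.parts.toFinset := by rw [ha]; exact Finset.mem_singleton_self a
      exact p.parts_pos (Multiset.mem_toFinset.mp hane)
    have hdvd : a ∣ N := ⟨Multiset.card p.parts, by rw [mul_comm]; exact hsum.symm⟩
    have hcard : Multiset.card p.parts = N / a :=
      (Nat.div_eq_of_eq_mul_left ha0 hsum.symm).symm
    refine ⟨a, Nat.mem_divisors.mpr ⟨hdvd, hN0⟩, ?_⟩
    apply Nat.Partition.ext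
    simp only
    rw [hrep, hcard]

lemma mkPart_parts (N : ℕ) (q : ℕ × ℕ × ℕ × ℕ) (hq : q ∈ QQ N) :
    (mkPart N q hq).parts = Multiset.replicate q.2.1 q.1 + Multiset.replicate q.2.2.2 q.2.2.1 :=
  rfl

lemma mem_QQ {N : ℕ} {q : ℕ × ℕ × ℕ × ℕ} :
    q ∈ QQ N ↔ (ok q.1 ∧ ok q.2.2.1 ∧ 1 ≤ q.2.1 ∧ 1 ≤ q.2.2.2 ∧
      q.1 * q.2.1 + q.2.2.1 * q.2.2.2 = N) ∧ q.1 < q.2.2.1 := by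
  rw [QQ, Finset.mem_filter, mem_PP]

lemma card_two (N : ℕ) (hN : N % 12 = 7) :
    (QQ N).card = (Finset.univ.filter fun p : Nat.Partition N =>
      p.parts.toFinset.card = 2 ∧ ∀ i ∈ p.parts, ¬ 4 ∣ i ∧ ¬ 3 ∣ i).card := by
  apply Finset.card_bij (fun q hq => mkPart N q hq)
  · intro q hq
    obtain ⟨⟨ha, hb, hi, hj, hsum⟩, hab⟩ := mem_QQ.mp hq
    rw [Finset.mem_filter]
    refine ⟨Finset.mem_univ _, ?_, ?_⟩
    · rw [mkPart_parts, Multiset.toFinset_add, Multiset.toFinset_replicate,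
        Multiset.toFinset_replicate, if_neg (by omega : ¬ q.2.1 = 0),
        if_neg (by omega : ¬ q.2.2.2 = 0), ← Finset.insert_eq]
      exact Finset.card_pair (by omega)
    · intro x hx
      rw [mkPart_parts, Multiset.mem_add] at hx
      rcases hx with h | h <;> rw [Multiset.eq_of_mem_replicate h]
      · exact ⟨ha.1, ha.2⟩
      · exact ⟨hb.1, hb.2⟩
  · rintro ⟨a1, i1, b1, j1⟩ h1 ⟨a2, i2, b2, j2⟩ h2 heq
    obtain ⟨⟨ha1, hb1, hi1, hj1, hsum1⟩, hab1⟩ := mem_QQ.mp h1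
    obtain ⟨⟨ha2, hb2, hi2, hj2, hsum2⟩, hab2⟩ := mem_QQ.mp h2
    simp only at ha1 hb1 hi1 hj1 hsum1 hab1 ha2 hb2 hi2 hj2 hsum2 hab2
    have hM : Multiset.replicate i1 a1 + Multiset.replicate j1 b1
        = Multiset.replicate i2 a2 + Multiset.replicate j2 b2 := by
      have := congrArg Nat.Partition.parts heq
      rwa [mkPart_parts, mkPart_parts] at this
    have mem1 : ∀ x : ℕ, x ∈ Multiset.replicate i1 a1 + Multiset.replicate j1 b1 ↔
        (x = a1 ∨ x = b1) := by
      intro x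
      simp only [Multiset.mem_add, Multiset.mem_replicate]
      omega
    have mem2 : ∀ x : ℕ, x ∈ Multiset.replicate i2 a2 + Multiset.replicate j2 b2 ↔
        (x = a2 ∨ x = b2) := by
      intro x
      simp only [Multiset.mem_add, Multiset.mem_replicate]
      omega
    have e1 : a1 = a2 ∨ a1 = b2 := by rw [← mem2, ← hM, mem1]; left; rfl
    have e2 : b1 = a2 ∨ b1 = b2 := by rw [← mem2, ← hM, mem1]; right; rfl
    have e3 : a2 = a1 ∨ a2 = b1 := by rw [← mem1, hM, mem2]; left; rfl
    have haa : a1 = a2 ∧ b1 = b2 := by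
      rcases e1 with h | h <;> rcases e2 with h' | h' <;> rcases e3 with h'' | h'' <;> omega
    obtain ⟨rfl, rfl⟩ := (by exact haa : a1 = a2 ∧ b1 = b2)
    have hba : ¬ b1 = a1 := by omega
    have hab' : ¬ a1 = b1 := by omega
    have hcnt1 : i1 = i2 := by
      have h := congrArg (Multiset.count a1) hM
      simp only [Multiset.count_add, Multiset.count_replicate, if_pos rfl, if_neg hba,
        eq_self_iff_true, if_true] at h
      omega
    have hcnt2 : j1 = j2 := by
      have h := congrArg (Multiset.count b1) hM
      simp only [Multiset.count_add, Multiset.count_replicate, if_pos rfl, if_neg hab',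
        eq_self_iff_true, if_true] at h
      omega
    simp [hcnt1, hcnt2]
  · intro p hp
    rw [Finset.mem_filter] at hp
    obtain ⟨-, hk2, hcond⟩ := hp
    obtain ⟨x, y, hxy, hsetxy⟩ := Finset.card_eq_two.mp hk2
    obtain ⟨a, b, hab, hset⟩ : ∃ a b, a < b ∧ p.parts.toFinset = {a, b} := by
      rcases lt_or_gt_of_ne hxy with h | h
      · exact ⟨x, y, h, hsetxy⟩
      · exact ⟨y, x, h, by rw [hsetxy, Finset.pair_comm]⟩
    have hamem : a ∈ p.parts := by
      rw [← Multiset.mem_toFinset, hset]; exact Finset.mem_insert_self a {b}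
    have hbmem : b ∈ p.parts := by
      rw [← Multiset.mem_toFinset, hset]
      exact Finset.mem_insert_of_mem (Finset.mem_singleton_self b)
    set i := Multiset.count a p.parts with hidef
    set j := Multiset.count b p.parts with hjdef
    have hi1 : 1 ≤ i := Multiset.one_le_count_iff_mem.mpr hamem
    have hj1 : 1 ≤ j := Multiset.one_le_count_iff_mem.mpr hbmem
    have hrep : p.parts = Multiset.replicate i a + Multiset.replicate j b := by
      ext c
      rw [Multiset.count_add, Multiset.count_replicate, Multiset.count_replicate]
      by_cases hca : a = c
      · subst hca
        rw [if_pos rfl, if_neg (by omega)]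
        omega
      · by_cases hcb : b = c
        · subst hcb
          rw [if_neg hca, if_pos rfl]
          omega
        · rw [if_neg hca, if_neg hcb]
          have : c ∉ p.parts := by
            intro hc
            have : c ∈ p.parts.toFinset := Multiset.mem_toFinset.mpr hc
            rw [hset] at this
            rcases Finset.mem_insert.mp this with h | h
            · exact hca h.symm
            · exact hcb (Finset.mem_singleton.mp h).symm
          simp [Multiset.count_eq_zero.mpr this]
    have hsum : a * i + b * j = N := by
      have := p.parts_sum
      rw [hrep, Multiset.sum_add, Multiset.sum_replicate, Multiset.sum_replicate,
        smul_eq_mul, smul_eq_mul] at this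
      rw [mul_comm a i, mul_comm b j]
      exact this
    have hoka : ok a := by
      obtain ⟨h4, h3⟩ := hcond a hamem; exact ⟨h4, h3⟩
    have hokb : ok b := by
      obtain ⟨h4, h3⟩ := hcond b hbmem; exact ⟨h4, h3⟩
    have hq : (a, i, b, j) ∈ QQ N := mem_QQ.mpr ⟨⟨hoka, hokb, hi1, hj1, hsum⟩, hab⟩
    refine ⟨(a, i, b, j), hq, ?_⟩
    apply Nat.Partition.ext
    rw [mkPart_parts]
    exact hrep.symm

lemma cond_of_one (N : ℕ) (hN : N % 12 = 7) (p : Nat.Partition N)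
    (h1 : p.parts.toFinset.card = 1) : ∀ i ∈ p.parts, ¬ 4 ∣ i ∧ ¬ 3 ∣ i := by
  obtain ⟨a, ha⟩ := Finset.card_eq_one.mp h1
  have hall : ∀ b ∈ p.parts, b = a := by
    intro b hb
    have : b ∈ p.parts.toFinset := Multiset.mem_toFinset.mpr hb
    rw [ha] at this
    exact Finset.mem_singleton.mp this
  have hrep : p.parts = Multiset.replicate (Multiset.card p.parts) a :=
    Multiset.eq_replicate_card.mpr hall
  have hsum : Multiset.card p.parts * a = N := by
    have := p.parts_sum
    rw [hrep, Multiset.sum_replicate, smul_eq_mul] at this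
    exact this
  have hdvd : a ∣ N := ⟨Multiset.card p.parts, by rw [mul_comm]; exact hsum.symm⟩
  have hok : ok a := ok_of_dvd hN hdvd
  intro x hx
  rw [hall x hx]
  exact ⟨hok.1, hok.2⟩

theorem main (N : ℕ) (hN : N % 12 = 7) : Rbar 4 3 N % 8 = 0 := by
  have hN2 : N % 2 = 1 := by omega
  set A := N.divisors.card with hA
  set B := (QQ N).card with hB
  have hcast : ((Rbar 4 3 N : ℕ) : ZMod 8) = ((2 * A + 4 * B : ℕ) : ZMod 8) := by
    rw [Rbar, Nat.cast_sum]
    simp only [apply_ite (fun x : ℕ => (x : ZMod 8)), Nat.cast_pow, Nat.cast_ofNat,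
      Nat.cast_zero]
    have step : ∀ p : Nat.Partition N,
        (if (∀ i ∈ p.parts, ¬ 4 ∣ i ∧ ¬ 3 ∣ i) then (2:ZMod 8) ^ p.parts.toFinset.card else 0)
        = (if p.parts.toFinset.card = 1 then (2:ZMod 8) else 0)
          + (if (p.parts.toFinset.card = 2 ∧ ∀ i ∈ p.parts, ¬ 4 ∣ i ∧ ¬ 3 ∣ i)
              then (4:ZMod 8) else 0) := by
      intro p
      by_cases h1 : p.parts.toFinset.card = 1
      · have hcond := cond_of_one N hN p h1
        rw [if_pos hcond, if_pos h1, if_neg (by rintro ⟨hc2, -⟩; omega), h1]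
        norm_num
      · by_cases h2 : p.parts.toFinset.card = 2
        · by_cases hc : ∀ i ∈ p.parts, ¬ 4 ∣ i ∧ ¬ 3 ∣ i
          · rw [if_pos hc, if_neg h1, if_pos ⟨h2, hc⟩, h2]
            norm_num
          · rw [if_neg hc, if_neg h1, if_neg (show ¬(p.parts.toFinset.card = 2 ∧
                ∀ i ∈ p.parts, ¬ 4 ∣ i ∧ ¬ 3 ∣ i) from fun h => hc h.2)]
            norm_num
        · have h0 : p.parts.toFinset.card ≠ 0 := by
            intro hc
            rw [Finset.card_eq_zero, Multiset.toFinset_eq_empty] at hc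
            have := p.parts_sum
            rw [hc] at this
            simp at this
            omega
          have h3 : 3 ≤ p.parts.toFinset.card := by omega
          rw [if_neg h1, if_neg (show ¬(p.parts.toFinset.card = 2 ∧
            ∀ i ∈ p.parts, ¬ 4 ∣ i ∧ ¬ 3 ∣ i) from fun h => h2 h.1)]
          by_cases hc : ∀ i ∈ p.parts, ¬ 4 ∣ i ∧ ¬ 3 ∣ i
          · rw [if_pos hc]
            obtain ⟨m, hm⟩ := Nat.exists_eq_add_of_le h3
            rw [hm, pow_add]
            have h8 : (2:ZMod 8) ^ 3 = 0 := by decide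
            rw [h8, zero_mul, add_zero]
          · rw [if_neg hc]
            norm_num
    have e1 : (∑ p : Nat.Partition N,
          if (∀ i ∈ p.parts, ¬ 4 ∣ i ∧ ¬ 3 ∣ i) then (2:ZMod 8) ^ p.parts.toFinset.card else 0)
        = ∑ p : Nat.Partition N, ((if p.parts.toFinset.card = 1 then (2:ZMod 8) else 0)
          + if (p.parts.toFinset.card = 2 ∧ ∀ i ∈ p.parts, ¬ 4 ∣ i ∧ ¬ 3 ∣ i)
              then (4:ZMod 8) else 0) :=
      Finset.sum_congr rfl (fun p _ => step p)
    rw [e1, Finset.sum_add_distrib, ← Finset.sum_filter, ← Finset.sum_filter,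
      Finset.sum_const, Finset.sum_const, ← card_one N hN, ← card_two N hN]
    push_cast
    rw [nsmul_eq_mul, nsmul_eq_mul]
    ring
  have h8 : (8:ℕ) ∣ 2 * A + 4 * B := by
    have hP := card_PP_split N
    have h4P := four_dvd_card_PP (N := N) hN2
    have hDD := sum_DD N hN
    have h4S := four_dvd_sigma (N := N) hN
    have h2A := two_dvd_card_divisors (N := N) hN
    omega
  have hz : ((Rbar 4 3 N : ℕ) : ZMod 8) = 0 := by
    rw [hcast, ZMod.natCast_eq_zero_iff]
    exact h8
  rw [ZMod.natCast_eq_zero_iff] at hz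
  omega

end RbarAux

theorem Rbar_four_three_twelve_n_add_seven (n : ℕ) : Rbar 4 3 (12 * n + 7) % 8 = 0 := by
  exact RbarAux.main (12 * n + 7) (by omega)
end

section
/- For all n ≥ 0, R̄_{4,9}(12n+3) ≡ 0 (mod 8). -/
open Finset

/-- valid part size: not divisible by 4 or 9 -/
def vld (d : ℕ) : Prop := ¬ (4:ℕ) ∣ d ∧ ¬ (9:ℕ) ∣ d

instance : DecidablePred vld := fun d => by unfold vld; infer_instance

lemma vld_pos {d : ℕ} (h : vld d) : 0 < d := by
  rcases Nat.eq_zero_or_pos d with h0 | h0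
  · exact absurd (h0 ▸ (dvd_zero 4)) h.1
  · exact h0

/-- number of valid divisors -/
def rv (x : ℕ) : ℕ := (x.divisors.filter vld).card

lemma even_card_of_half {α : Type*} (s : Finset α) (P : α → Prop) [DecidablePred P]
    (h : (s.filter P).card = (s.filter (fun a => ¬ P a)).card) : Even s.card := by
  rw [← Finset.card_filter_add_card_filter_not (p := P), h]
  exact ⟨_, rfl⟩

lemma rv_even (x : ℕ) (hx : x % 4 = 2 ∨ x % 4 = 3) : Even (rv x) := by
  have hx0 : x ≠ 0 := by omega
  rcases hx with hx | hx
  · -- x ≡ 2 mod 4 : pair d ↔ 2d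
    apply even_card_of_half _ (fun d => ¬ (2:ℕ) ∣ d)
    apply Finset.card_nbij' (fun d => 2 * d) (fun d => d / 2)
    · intro d hd
      simp only [Finset.mem_coe, mem_filter, Nat.mem_divisors] at hd ⊢
      obtain ⟨⟨⟨hdx, _⟩, hv⟩, hodd⟩ := hd
      have h2x : (2:ℕ) ∣ x := by omega
      have hcop : Nat.Coprime d 2 := by
        rcases Nat.coprime_or_dvd_of_prime Nat.prime_two d with h | h
        · exact h.symm
        · exact absurd h (by omega)
      refine ⟨⟨⟨?_, hx0⟩, ?_, ?_⟩, by omega⟩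
      · rcases h2x with ⟨y, rfl⟩
        have : d ∣ y := (Nat.Coprime.dvd_of_dvd_mul_left hcop hdx)
        exact mul_dvd_mul_left 2 this
      · intro h4; exact hv.1 (by omega)
      · intro h9
        exact hv.2 ((Nat.Coprime.dvd_of_dvd_mul_left (by norm_num) h9))
    · intro d hd
      simp only [Finset.mem_coe, mem_filter, Nat.mem_divisors, not_not] at hd ⊢
      obtain ⟨⟨⟨hdx, _⟩, hv⟩, h2d⟩ := hd
      have hdd : d / 2 ∣ d := ⟨2, by omega⟩
      refine ⟨⟨⟨hdd.trans hdx, hx0⟩, fun h4 => hv.1 ?_, fun h9 => hv.2 (h9.trans hdd)⟩, fun h2 => hv.1 ?_⟩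
      · rcases h4 with ⟨y, hy⟩; omega
      · rcases h2 with ⟨y, hy⟩; omega
    · intro d hd; simp only [Finset.mem_coe, mem_filter] at hd; beta_reduce; omega
    · intro d hd
      simp only [Finset.mem_coe, mem_filter, not_not] at hd
      rcases hd.2 with ⟨y, hy⟩; beta_reduce; omega
  · -- x ≡ 3 mod 4 : x odd
    by_cases h3 : (3:ℕ) ∣ x
    · -- pair d ↔ 3d
      apply even_card_of_half _ (fun d => ¬ (3:ℕ) ∣ d)
      apply Finset.card_nbij' (fun d => 3 * d) (fun d => d / 3)
      · intro d hd
        simp only [Finset.mem_coe, mem_filter, Nat.mem_divisors] at hd ⊢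
        obtain ⟨⟨⟨hdx, _⟩, hv⟩, h3d⟩ := hd
        have hcop : Nat.Coprime d 3 := by
          rcases Nat.coprime_or_dvd_of_prime Nat.prime_three d with h | h
          · exact h.symm
          · exact absurd h h3d
        refine ⟨⟨⟨?_, hx0⟩, ?_, ?_⟩, by omega⟩
        · rcases h3 with ⟨y, rfl⟩
          exact mul_dvd_mul_left 3 (Nat.Coprime.dvd_of_dvd_mul_left hcop hdx)
        · intro h4
          exact hv.1 (Nat.Coprime.dvd_of_dvd_mul_left (by norm_num) h4)
        · intro h9; rcases h9 with ⟨y, hy⟩; exact h3d ⟨y, by omega⟩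
      · intro d hd
        simp only [Finset.mem_coe, mem_filter, Nat.mem_divisors, not_not] at hd ⊢
        obtain ⟨⟨⟨hdx, _⟩, hv⟩, h3d⟩ := hd
        have hdd : d / 3 ∣ d := ⟨3, by omega⟩
        refine ⟨⟨⟨hdd.trans hdx, hx0⟩, fun h4 => hv.1 (h4.trans hdd), fun h9 => hv.2 (h9.trans hdd)⟩,
          fun hh => hv.2 ?_⟩
        rcases hh with ⟨y, hy⟩; rcases h3d with ⟨z, hz⟩
        exact ⟨y, by omega⟩
      · intro d hd; simp only [Finset.mem_coe, mem_filter] at hd; beta_reduce; omega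
      · intro d hd
        simp only [Finset.mem_coe, mem_filter, not_not] at hd
        rcases hd.2 with ⟨y, hy⟩; beta_reduce; omega
    · -- 3 ∤ x, x odd: all divisors valid; pair d ↔ x/d; no fixed point as x ≡ 3 mod 4
      have hall : x.divisors.filter vld = x.divisors := by
        apply Finset.filter_true_of_mem
        intro d hd
        rw [Nat.mem_divisors] at hd
        constructor
        · intro h4
          have : (2:ℕ) ∣ x := (dvd_trans (by norm_num) h4).trans hd.1
          omega
        · intro h9
          exact h3 ((dvd_trans (by norm_num) h9).trans hd.1)
      unfold rv
      rw [hall]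
      apply even_card_of_half _ (fun d => d * d < x)
      apply Finset.card_nbij' (fun d => x / d) (fun d => x / d)
      · intro d hd
        simp only [Finset.mem_coe, mem_filter, Nat.mem_divisors, not_lt] at hd ⊢
        obtain ⟨⟨hdx, _⟩, hlt⟩ := hd
        obtain ⟨y, rfl⟩ := hdx
        have hd0 : 0 < d := Nat.pos_of_ne_zero fun h => by subst h; simp at hx0
        have hy0 : 0 < y := Nat.pos_of_ne_zero fun h => by subst h; simp at hx0
        rw [Nat.mul_div_cancel_left y hd0]
        refine ⟨⟨⟨d, mul_comm d y⟩, hx0⟩, ?_⟩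
        nlinarith
      · intro d hd
        simp only [Finset.mem_coe, mem_filter, Nat.mem_divisors, not_lt] at hd ⊢
        obtain ⟨⟨hdx, _⟩, hlt⟩ := hd
        obtain ⟨y, rfl⟩ := hdx
        have hd0 : 0 < d := Nat.pos_of_ne_zero fun h => by subst h; simp at hx0
        have hy0 : 0 < y := Nat.pos_of_ne_zero fun h => by subst h; simp at hx0
        rw [Nat.mul_div_cancel_left y hd0]
        refine ⟨⟨⟨d, mul_comm d y⟩, hx0⟩, ?_⟩
        -- need y * y < d * y, i.e. y < d; we know ¬ d*d < d*y so y ≤ d; y ≠ d since d*y ≡ 3 mod 4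
        have hyd : y ≤ d := by
          by_contra hc
          exact absurd (by nlinarith : d * d < d * y) (by omega)
        rcases lt_or_eq_of_le hyd with h | h
        · nlinarith
        · exfalso
          rw [← h] at hx
          rcases Nat.even_or_odd y with ⟨k, rfl⟩ | ⟨k, rfl⟩
          · have h1 : (k + k) * (k + k) = 4 * (k * k) := by ring
            have h2 : (4 * (k * k)) % 4 = 0 := Nat.mul_mod_right 4 _
            omega
          · have h1 : (2 * k + 1) * (2 * k + 1) = 4 * (k * k + k) + 1 := by ring
            have h2 : (4 * (k * k + k)) % 4 = 0 := Nat.mul_mod_right 4 _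
            omega
      · intro d hd
        simp only [Finset.mem_coe, mem_filter, Nat.mem_divisors] at hd
        exact Nat.div_div_self hd.1.1 hx0
      · intro d hd
        simp only [Finset.mem_coe, mem_filter, Nat.mem_divisors] at hd
        exact Nat.div_div_self hd.1.1 hx0

/-- the valid divisors of N -/
def dv (N : ℕ) : Finset ℕ := N.divisors.filter vld

lemma mem_dv_of_not3 {N d : ℕ} (hN3 : 3 ∣ N) (hd : d ∈ dv N) (h3 : ¬ (3:ℕ) ∣ d) :
    3 * d ∈ dv N ∧ (3:ℕ) ∣ 3 * d := by
  simp only [dv, Finset.mem_filter, Nat.mem_divisors] at hd ⊢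
  obtain ⟨⟨hdN, hN0⟩, hv⟩ := hd
  have hcop : Nat.Coprime d 3 := by
    rcases Nat.coprime_or_dvd_of_prime Nat.prime_three d with h | h
    · exact h.symm
    · exact absurd h h3
  refine ⟨⟨⟨?_, hN0⟩, ?_, ?_⟩, ⟨d, rfl⟩⟩
  · rcases hN3 with ⟨y, rfl⟩
    exact mul_dvd_mul_left 3 (Nat.Coprime.dvd_of_dvd_mul_left hcop hdN)
  · intro h4
    exact hv.1 (Nat.Coprime.dvd_of_dvd_mul_left (by norm_num) h4)
  · intro h9; rcases h9 with ⟨y, hy⟩; exact h3 ⟨y, by omega⟩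

lemma mem_dv_of_dvd3 {N d : ℕ} (hd : d ∈ dv N) (h3 : (3:ℕ) ∣ d) :
    d / 3 ∈ dv N ∧ ¬ (3:ℕ) ∣ (d / 3) := by
  simp only [dv, Finset.mem_filter, Nat.mem_divisors] at hd ⊢
  obtain ⟨⟨hdN, hN0⟩, hv⟩ := hd
  have hdd : d / 3 ∣ d := ⟨3, by omega⟩
  refine ⟨⟨⟨hdd.trans hdN, hN0⟩, fun h4 => hv.1 (h4.trans hdd), fun h9 => hv.2 (h9.trans hdd)⟩,
    fun hh => hv.2 ?_⟩
  rcases hh with ⟨y, hy⟩; rcases h3 with ⟨z, hz⟩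
  exact ⟨y, by omega⟩

lemma even_card_dv {N : ℕ} (hN3 : 3 ∣ N) : Even (dv N).card := by
  apply even_card_of_half _ (fun d => ¬ (3:ℕ) ∣ d)
  apply Finset.card_nbij' (fun d => 3 * d) (fun d => d / 3)
  · intro d hd
    simp only [Finset.mem_coe, mem_filter] at hd
    have := mem_dv_of_not3 hN3 hd.1 hd.2
    simp only [Finset.mem_coe, mem_filter, not_not]
    exact ⟨this.1, this.2⟩
  · intro d hd
    simp only [Finset.mem_coe, mem_filter, not_not] at hd
    have := mem_dv_of_dvd3 hd.1 hd.2
    simp only [Finset.mem_coe, mem_filter]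
    exact this
  · intro d _; beta_reduce; omega
  · intro d hd
    simp only [Finset.mem_coe, mem_filter, not_not] at hd
    rcases hd.2 with ⟨y, hy⟩; beta_reduce; omega

lemma four_dvd_sigma {N : ℕ} (hN3 : 3 ∣ N) : 4 ∣ ∑ d ∈ dv N, N / d := by
  rw [← Finset.sum_filter_add_sum_filter_not (dv N) (fun d => ¬ (3:ℕ) ∣ d)]
  have h2 : ∑ d ∈ (dv N).filter (fun d => ¬¬ (3:ℕ) ∣ d), N / d
      = ∑ d ∈ (dv N).filter (fun d => ¬ (3:ℕ) ∣ d), N / (3 * d) := by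
    apply Finset.sum_nbij' (fun d => d / 3) (fun d => 3 * d)
    · intro d hd
      simp only [mem_filter, not_not] at hd
      have := mem_dv_of_dvd3 hd.1 hd.2
      simp only [mem_filter]
      exact this
    · intro d hd
      simp only [mem_filter] at hd
      have := mem_dv_of_not3 hN3 hd.1 hd.2
      simp only [mem_filter, not_not]
      exact ⟨this.1, this.2⟩
    · intro d hd
      simp only [mem_filter, not_not] at hd
      rcases hd.2 with ⟨y, hy⟩; omega
    · intro d _; omega
    · intro d hd
      simp only [mem_filter, not_not] at hd
      rcases hd.2 with ⟨y, hy⟩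
      subst hy
      rw [Nat.mul_div_cancel_left y (by norm_num)]
  rw [h2, ← Finset.sum_add_distrib]
  apply Finset.dvd_sum
  intro d hd
  simp only [mem_filter] at hd
  have h3d := (mem_dv_of_not3 hN3 hd.1 hd.2).1
  simp only [dv, Finset.mem_filter, Nat.mem_divisors] at h3d hd
  obtain ⟨⟨h3dN, hN0⟩, _⟩ := h3d
  rcases h3dN with ⟨u, hu⟩
  have hd0 : 0 < d := vld_pos hd.1.2
  have e1 : N / d = 3 * u := by
    rw [hu]; rw [show 3 * d * u = d * (3 * u) by ring]
    exact Nat.mul_div_cancel_left _ hd0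
  have e2 : N / (3 * d) = u := by
    rw [hu]; exact Nat.mul_div_cancel_left _ (by omega)
  omega

/-- quadruples (d, a1, e, a2) with vld d, vld e, a1,a2 ≥ 1, a1*d + a2*e = N -/
def QQ (N : ℕ) : Finset (ℕ × ℕ × ℕ × ℕ) :=
  ((Finset.range (N+1)) ×ˢ (Finset.range (N+1)) ×ˢ (Finset.range (N+1)) ×ˢ (Finset.range (N+1))).filter
    (fun q => vld q.1 ∧ vld q.2.2.1 ∧ 1 ≤ q.2.1 ∧ 1 ≤ q.2.2.2 ∧
      q.2.1 * q.1 + q.2.2.2 * q.2.2.1 = N)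

lemma mem_QQ {N : ℕ} {q : ℕ × ℕ × ℕ × ℕ} :
    q ∈ QQ N ↔ vld q.1 ∧ vld q.2.2.1 ∧ 1 ≤ q.2.1 ∧ 1 ≤ q.2.2.2 ∧
      q.2.1 * q.1 + q.2.2.2 * q.2.2.1 = N := by
  simp only [QQ, Finset.mem_filter, Finset.mem_product, Finset.mem_range]
  constructor
  · tauto
  · rintro ⟨h1, h2, h3, h4, h5⟩
    refine ⟨⟨?_, ?_, ?_, ?_⟩, h1, h2, h3, h4, h5⟩ <;>
    · have hd0 := vld_pos h1
      have he0 := vld_pos h2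
      have b1 : q.1 ≤ q.2.1 * q.1 := Nat.le_mul_of_pos_left _ (by omega)
      have b2 : q.2.1 ≤ q.2.1 * q.1 := Nat.le_mul_of_pos_right _ (by omega)
      have b3 : q.2.2.1 ≤ q.2.2.2 * q.2.2.1 := Nat.le_mul_of_pos_left _ (by omega)
      have b4 : q.2.2.2 ≤ q.2.2.2 * q.2.2.1 := Nat.le_mul_of_pos_right _ (by omega)
      omega

lemma card_QQ_lt_eq_gt (N : ℕ) :
    ((QQ N).filter (fun q => q.1 < q.2.2.1)).card
      = ((QQ N).filter (fun q => q.2.2.1 < q.1)).card := by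
  apply Finset.card_nbij' (fun q => (q.2.2.1, q.2.2.2, q.1, q.2.1))
    (fun q => (q.2.2.1, q.2.2.2, q.1, q.2.1))
  · intro q hq
    simp only [Finset.mem_coe, Finset.mem_filter, mem_QQ] at hq ⊢
    obtain ⟨⟨h1, h2, h3, h4, h5⟩, h6⟩ := hq
    exact ⟨⟨h2, h1, h4, h3, by omega⟩, h6⟩
  · intro q hq
    simp only [Finset.mem_coe, Finset.mem_filter, mem_QQ] at hq ⊢
    obtain ⟨⟨h1, h2, h3, h4, h5⟩, h6⟩ := hq
    exact ⟨⟨h2, h1, h4, h3, by omega⟩, h6⟩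
  · intro q _; rfl
  · intro q _; rfl

lemma card_QQ_split (N : ℕ) :
    (QQ N).card = 2 * ((QQ N).filter (fun q => q.1 < q.2.2.1)).card
      + ((QQ N).filter (fun q => q.1 = q.2.2.1)).card := by
  rw [← Finset.card_filter_add_card_filter_not (s := QQ N)
    (p := fun q => q.1 < q.2.2.1)]
  rw [← Finset.card_filter_add_card_filter_not
    (s := (QQ N).filter (fun q => ¬ q.1 < q.2.2.1)) (p := fun q => q.2.2.1 < q.1)]
  rw [Finset.filter_filter, Finset.filter_filter]
  have e1 : ((QQ N).filter (fun q => ¬q.1 < q.2.2.1 ∧ q.2.2.1 < q.1)).card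
      = ((QQ N).filter (fun q => q.2.2.1 < q.1)).card := by
    congr 1
    apply Finset.filter_congr
    intro q _
    constructor
    · tauto
    · intro h; exact ⟨by omega, h⟩
  have e2 : ((QQ N).filter (fun q => ¬q.1 < q.2.2.1 ∧ ¬q.2.2.1 < q.1)).card
      = ((QQ N).filter (fun q => q.1 = q.2.2.1)).card := by
    congr 1
    apply Finset.filter_congr
    intro q _
    constructor
    · intro h; omega
    · intro h; omega
  rw [e1, e2, ← card_QQ_lt_eq_gt]
  ring

lemma card_QQ_eq_W {N : ℕ} (hN0 : 0 < N) :
    (QQ N).card = ∑ x ∈ Finset.Ico 1 N, rv x * rv (N - x) := by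
  rw [Finset.card_eq_sum_card_fiberwise (f := fun q : ℕ × ℕ × ℕ × ℕ => q.2.1 * q.1)
    (t := Finset.Ico 1 N)]
  · apply Finset.sum_congr rfl
    intro x hx
    rw [Finset.mem_Ico] at hx
    have hx0 : x ≠ 0 := by omega
    have hNx0 : N - x ≠ 0 := by omega
    rw [rv, rv, ← Finset.card_product]
    apply Finset.card_nbij' (fun q => (q.1, q.2.2.1))
      (fun p => (p.1, x / p.1, p.2, (N - x) / p.2))
    · intro q hq
      simp only [Finset.mem_coe, Finset.mem_filter, mem_QQ, Finset.mem_product, Nat.mem_divisors] at hq ⊢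
      obtain ⟨⟨h1, h2, h3, h4, h5⟩, h6⟩ := hq
      refine ⟨⟨⟨⟨q.2.1, by rw [← h6]; ring⟩, hx0⟩, h1⟩, ⟨⟨q.2.2.2, ?_⟩, hNx0⟩, h2⟩
      have : N - x = q.2.2.2 * q.2.2.1 := by omega
      rw [this]; ring
    · intro p hp
      simp only [Finset.mem_coe, Finset.mem_filter, mem_QQ, Finset.mem_product, Nat.mem_divisors] at hp ⊢
      obtain ⟨⟨⟨hd, _⟩, hvd⟩, ⟨he, _⟩, hve⟩ := hp
      have hd0 := vld_pos hvd
      have he0 := vld_pos hve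
      have hxd : x / p.1 * p.1 = x := Nat.div_mul_cancel hd
      have hxe : (N - x) / p.2 * p.2 = N - x := Nat.div_mul_cancel he
      have hd1 : 1 ≤ x / p.1 := Nat.one_le_div_iff hd0 |>.2 (Nat.le_of_dvd (by omega) hd)
      have he1 : 1 ≤ (N - x) / p.2 := Nat.one_le_div_iff he0 |>.2 (Nat.le_of_dvd (by omega) he)
      exact ⟨⟨hvd, hve, hd1, he1, by omega⟩, hxd⟩
    · intro q hq
      simp only [Finset.mem_coe, Finset.mem_filter, mem_QQ] at hq
      obtain ⟨⟨h1, h2, h3, h4, h5⟩, h6⟩ := hq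
      have hd0 := vld_pos h1
      have he0 := vld_pos h2
      have e1 : x / q.1 = q.2.1 := by rw [← h6]; exact Nat.mul_div_cancel _ hd0
      have e2 : (N - x) / q.2.2.1 = q.2.2.2 := by
        have : N - x = q.2.2.2 * q.2.2.1 := by omega
        rw [this]; exact Nat.mul_div_cancel _ he0
      simp [e1, e2]
    · intro p _; rfl
  · intro q hq
    rw [Finset.mem_coe, mem_QQ] at hq
    obtain ⟨h1, h2, h3, h4, h5⟩ := hq
    have hd0 := vld_pos h1
    have he0 := vld_pos h2
    have b1 : 1 ≤ q.2.1 * q.1 := Nat.mul_pos (by omega) hd0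
    have b3 : 1 ≤ q.2.2.2 * q.2.2.1 := Nat.mul_pos (by omega) he0
    rw [Finset.mem_coe, Finset.mem_Ico]
    beta_reduce; omega

lemma four_dvd_W {N : ℕ} (hN4 : N % 4 = 3) :
    4 ∣ ∑ x ∈ Finset.Ico 1 N, rv x * rv (N - x) := by
  have hterm : ∀ x ∈ Finset.Ico 1 N, 2 ∣ rv x * rv (N - x) := by
    intro x hx
    rw [Finset.mem_Ico] at hx
    have : x % 4 = 2 ∨ x % 4 = 3 ∨ (N - x) % 4 = 2 ∨ (N - x) % 4 = 3 := by omega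
    rcases this with h | h | h | h
    · exact Dvd.dvd.mul_right ((rv_even x (Or.inl h)).two_dvd) _
    · exact Dvd.dvd.mul_right ((rv_even x (Or.inr h)).two_dvd) _
    · exact Dvd.dvd.mul_left ((rv_even _ (Or.inl h)).two_dvd) _
    · exact Dvd.dvd.mul_left ((rv_even _ (Or.inr h)).two_dvd) _
  rw [← Finset.sum_filter_add_sum_filter_not (Finset.Ico 1 N) (fun x => 2 * x < N)]
  have e1 : ∑ x ∈ (Finset.Ico 1 N).filter (fun x => ¬ 2 * x < N), rv x * rv (N - x)
      = ∑ x ∈ (Finset.Ico 1 N).filter (fun x => 2 * x < N), rv x * rv (N - x) := by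
    apply Finset.sum_nbij' (fun x => N - x) (fun x => N - x)
    · intro x hx
      simp only [Finset.mem_filter, Finset.mem_Ico] at hx ⊢
      omega
    · intro x hx
      simp only [Finset.mem_filter, Finset.mem_Ico] at hx ⊢
      omega
    · intro x hx
      simp only [Finset.mem_filter, Finset.mem_Ico] at hx
      omega
    · intro x hx
      simp only [Finset.mem_filter, Finset.mem_Ico] at hx
      omega
    · intro x hx
      simp only [Finset.mem_filter, Finset.mem_Ico] at hx
      have e : N - (N - x) = x := by omega
      rw [e]
      ring
  rw [e1]
  have hS : 2 ∣ ∑ x ∈ (Finset.Ico 1 N).filter (fun x => 2 * x < N), rv x * rv (N - x) := by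
    apply Finset.dvd_sum
    intro x hx
    simp only [Finset.mem_filter] at hx
    exact hterm x hx.1
  rcases hS with ⟨k, hk⟩
  exact ⟨k, by omega⟩

lemma card_QQ_diag (N : ℕ) :
    ((QQ N).filter (fun q => q.1 = q.2.2.1)).card = ∑ d ∈ dv N, (N / d - 1) := by
  rw [Finset.card_eq_sum_card_fiberwise (f := fun q : ℕ × ℕ × ℕ × ℕ => q.1) (t := dv N)]
  · apply Finset.sum_congr rfl
    intro d hd
    have hdv := hd
    simp only [dv, Finset.mem_filter, Nat.mem_divisors] at hdv
    obtain ⟨⟨hdN, hN0⟩, hvd⟩ := hdv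
    have hd0 := vld_pos hvd
    have hm : N / d * d = N := Nat.div_mul_cancel hdN
    rw [← Nat.card_Ico 1 (N / d)]
    apply Finset.card_nbij' (fun q => q.2.1) (fun a => (d, a, d, N / d - a))
    · rintro ⟨d1, a1, e1, a2⟩ hq
      simp only [Finset.mem_coe, Finset.mem_filter, mem_QQ] at hq
      obtain ⟨⟨⟨h1, h2, h3, h4, h5⟩, h6⟩, h7⟩ := hq
      subst h7
      obtain rfl : d1 = e1 := h6
      rw [Finset.mem_coe, Finset.mem_Ico]
      simp only at h5 ⊢
      have e : (a1 + a2) * d1 = N := by rw [add_mul]; omega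
      have e2 : N / d1 = a1 + a2 := by rw [← e]; exact Nat.mul_div_cancel _ hd0
      omega
    · intro a ha
      rw [Finset.mem_coe, Finset.mem_Ico] at ha
      have hsum : a * d + (N / d - a) * d = N := by
        rw [← add_mul, show a + (N / d - a) = N / d by omega]; exact hm
      simp only [Finset.mem_coe, Finset.mem_filter, mem_QQ]
      exact ⟨⟨⟨hvd, hvd, by omega, by omega, hsum⟩, by trivial⟩, by trivial⟩
    · rintro ⟨d1, a1, e1, a2⟩ hq
      simp only [Finset.mem_coe, Finset.mem_filter, mem_QQ] at hq
      obtain ⟨⟨⟨h1, h2, h3, h4, h5⟩, h6⟩, h7⟩ := hq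
      subst h7
      obtain rfl : d1 = e1 := h6
      simp only at h5 ⊢
      have e : (a1 + a2) * d1 = N := by rw [add_mul]; omega
      have e2 : N / d1 = a1 + a2 := by rw [← e]; exact Nat.mul_div_cancel _ hd0
      have e3 : N / d1 - a1 = a2 := by omega
      rw [e3]
    · intro a _; rfl
  · rintro ⟨d1, a1, e1, a2⟩ hq
    simp only [Finset.mem_coe, Finset.mem_filter, mem_QQ] at hq
    obtain ⟨⟨h1, h2, h3, h4, h5⟩, h6⟩ := hq
    obtain rfl : d1 = e1 := h6
    simp only at h5 ⊢
    simp only [Finset.mem_coe, dv, Finset.mem_filter, Nat.mem_divisors]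
    have hd0 := vld_pos h1
    have e : (a1 + a2) * d1 = N := by rw [add_mul]; omega
    have p1 : 1 ≤ a1 * d1 := Nat.mul_pos (by omega) hd0
    have p2 : 1 ≤ a2 * d1 := Nat.mul_pos (by omega) hd0
    refine ⟨⟨⟨a1 + a2, ?_⟩, by omega⟩, h1⟩
    rw [← e]; ring

lemma diag_add_card (N : ℕ) (hN0 : N ≠ 0) :
    (∑ d ∈ dv N, (N / d - 1)) + (dv N).card = ∑ d ∈ dv N, N / d := by
  rw [Finset.card_eq_sum_ones, ← Finset.sum_add_distrib]
  apply Finset.sum_congr rfl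
  intro d hd
  simp only [dv, Finset.mem_filter, Nat.mem_divisors] at hd
  have : 1 ≤ N / d := (Nat.one_le_div_iff (vld_pos hd.2)).2 (Nat.le_of_dvd (by omega) hd.1.1)
  omega

lemma parts_one_struct {N : ℕ} (p : N.Partition) {d : ℕ} (ht : p.parts.toFinset = {d}) :
    p.parts = Multiset.replicate p.parts.card d := by
  apply Multiset.eq_replicate.2 ⟨rfl, ?_⟩
  intro b hb
  have hbt : b ∈ p.parts.toFinset := Multiset.mem_toFinset.2 hb
  rw [ht, Finset.mem_singleton] at hbt
  exact hbt

lemma parts_two_struct {N : ℕ} (p : N.Partition) {d e : ℕ} (hde : d ≠ e)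
    (ht : p.parts.toFinset = {d, e}) :
    p.parts = Multiset.replicate (p.parts.count d) d
      + Multiset.replicate (p.parts.count e) e := by
  ext i
  rw [Multiset.count_add, Multiset.count_replicate, Multiset.count_replicate]
  split_ifs with h1 h2 h2
  · exact absurd (h1.trans h2.symm) hde
  · rw [← h1]; simp
  · rw [← h2]; simp
  · have hnm : i ∉ p.parts := by
      intro hmem
      have him : i ∈ p.parts.toFinset := Multiset.mem_toFinset.2 hmem
      rw [ht] at him
      simp only [Finset.mem_insert, Finset.mem_singleton] at him
      rcases him with rfl | rfl
      · exact h1 rfl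
      · exact h2 rfl
    simp [Multiset.count_eq_zero.2 hnm]

lemma pair_minmax {t : Finset ℕ} (h2 : t.card = 2) (H : t.Nonempty) :
    t = {t.min' H, t.max' H} ∧ t.min' H < t.max' H := by
  have hlt := Finset.min'_lt_max'_of_card t (by omega)
  refine ⟨(Finset.eq_of_subset_of_card_le ?_ ?_).symm, hlt⟩
  · intro x hx
    simp only [Finset.mem_insert, Finset.mem_singleton] at hx
    rcases hx with rfl | rfl
    · exact Finset.min'_mem t H
    · exact Finset.max'_mem t H
  · rw [h2, Finset.card_pair hlt.ne]

/-- partitions with all parts valid and exactly one distinct part size -/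
def s1 (N : ℕ) : Finset N.Partition :=
  Finset.univ.filter (fun p => (∀ i ∈ p.parts, ¬ (4:ℕ) ∣ i ∧ ¬ (9:ℕ) ∣ i)
    ∧ p.parts.toFinset.card = 1)

/-- partitions with all parts valid and exactly two distinct part sizes -/
def s2 (N : ℕ) : Finset N.Partition :=
  Finset.univ.filter (fun p => (∀ i ∈ p.parts, ¬ (4:ℕ) ∣ i ∧ ¬ (9:ℕ) ∣ i)
    ∧ p.parts.toFinset.card = 2)

lemma card_s1 (N : ℕ) (hN0 : N ≠ 0) : (s1 N).card = (dv N).card := by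
  apply Finset.card_bij (fun p _ => p.parts.toFinset.sum id)
  · intro p hp
    simp only [s1, Finset.mem_filter, Finset.mem_univ, true_and] at hp
    obtain ⟨hc, h1⟩ := hp
    obtain ⟨d, hd⟩ := Finset.card_eq_one.1 h1
    have hdp : d ∈ p.parts := Multiset.mem_toFinset.1 (by rw [hd]; exact Finset.mem_singleton_self d)
    have hrep := parts_one_struct p hd
    have hsum : Multiset.card p.parts * d = N := by
      have hps := p.parts_sum
      conv at hps => lhs; rw [hrep]
      rw [Multiset.sum_replicate, smul_eq_mul] at hps
      exact hps
    rw [hd, Finset.sum_singleton, id]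
    simp only [dv, Finset.mem_filter, Nat.mem_divisors]
    exact ⟨⟨⟨Multiset.card p.parts, by rw [mul_comm d]; exact hsum.symm⟩, hN0⟩, hc d hdp⟩
  · intro p1 hp1 p2 hp2 heq
    simp only [s1, Finset.mem_filter, Finset.mem_univ, true_and] at hp1 hp2
    obtain ⟨d1, hd1⟩ := Finset.card_eq_one.1 hp1.2
    obtain ⟨d2, hd2⟩ := Finset.card_eq_one.1 hp2.2
    rw [hd1, hd2, Finset.sum_singleton, Finset.sum_singleton, id, id] at heq
    subst heq
    have hd1p : d1 ∈ p1.parts := Multiset.mem_toFinset.1 (by rw [hd1]; exact Finset.mem_singleton_self d1)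
    have hd0 : 0 < d1 := p1.parts_pos hd1p
    have hr1 := parts_one_struct p1 hd1
    have hr2 := parts_one_struct p2 hd2
    have hs1 : Multiset.card p1.parts * d1 = N := by
      have hps := p1.parts_sum
      conv at hps => lhs; rw [hr1]
      rw [Multiset.sum_replicate, smul_eq_mul] at hps; exact hps
    have hs2 : Multiset.card p2.parts * d1 = N := by
      have hps := p2.parts_sum
      conv at hps => lhs; rw [hr2]
      rw [Multiset.sum_replicate, smul_eq_mul] at hps; exact hps
    have hcc : Multiset.card p1.parts = Multiset.card p2.parts :=
      Nat.eq_of_mul_eq_mul_right hd0 (hs1.trans hs2.symm)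
    apply Nat.Partition.ext
    rw [hr1, hr2, hcc]
  · intro d hd
    simp only [dv, Finset.mem_filter, Nat.mem_divisors] at hd
    obtain ⟨⟨hdN, hN0'⟩, hvd⟩ := hd
    have hd0 := vld_pos hvd
    have hq0 : N / d ≠ 0 := by
      have : 1 ≤ N / d := (Nat.one_le_div_iff hd0).2 (Nat.le_of_dvd (by omega) hdN)
      omega
    refine ⟨⟨Multiset.replicate (N / d) d, ?_, ?_⟩, ?_, ?_⟩
    · intro i hi
      rw [Multiset.eq_of_mem_replicate hi]
      exact hd0
    · rw [Multiset.sum_replicate, smul_eq_mul]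
      exact Nat.div_mul_cancel hdN
    · simp only [s1, Finset.mem_filter, Finset.mem_univ, true_and]
      constructor
      · intro i hi
        rw [Multiset.eq_of_mem_replicate hi]
        exact hvd
      · rw [Multiset.toFinset_replicate, if_neg hq0, Finset.card_singleton]
    · simp only [Multiset.toFinset_replicate, if_neg hq0, Finset.sum_singleton, id]

lemma card_s2 (N : ℕ) : (s2 N).card = ((QQ N).filter (fun q => q.1 < q.2.2.1)).card := by
  have hne : ∀ p ∈ s2 N, p.parts.toFinset.Nonempty := by
    intro p hp
    simp only [s2, Finset.mem_filter] at hp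
    exact Finset.card_pos.1 (by omega)
  apply Finset.card_bij (fun p hp =>
    (p.parts.toFinset.min' (hne p hp), p.parts.count (p.parts.toFinset.min' (hne p hp)),
     p.parts.toFinset.max' (hne p hp), p.parts.count (p.parts.toFinset.max' (hne p hp))))
  · intro p hp
    have hp' := hp
    simp only [s2, Finset.mem_filter, Finset.mem_univ, true_and] at hp'
    obtain ⟨hc, h2⟩ := hp'
    obtain ⟨ht, hlt⟩ := pair_minmax h2 (hne p hp)
    set m := p.parts.toFinset.min' (hne p hp) with hm
    set M := p.parts.toFinset.max' (hne p hp) with hM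
    have hmp : m ∈ p.parts := Multiset.mem_toFinset.1 (Finset.min'_mem _ _)
    have hMp : M ∈ p.parts := Multiset.mem_toFinset.1 (Finset.max'_mem _ _)
    have hrep := parts_two_struct p hlt.ne ht
    have hsum : p.parts.count m * m + p.parts.count M * M = N := by
      have hps := p.parts_sum
      conv at hps => lhs; rw [hrep]
      rw [Multiset.sum_add, Multiset.sum_replicate, Multiset.sum_replicate,
        smul_eq_mul, smul_eq_mul] at hps
      exact hps
    simp only [Finset.mem_filter, mem_QQ]
    refine ⟨⟨hc m hmp, hc M hMp, ?_, ?_, hsum⟩, hlt⟩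
    · exact Multiset.count_pos.2 hmp
    · exact Multiset.count_pos.2 hMp
  · intro p1 hp1 p2 hp2 heq
    have h1 := hp1; have h2 := hp2
    simp only [s2, Finset.mem_filter, Finset.mem_univ, true_and] at h1 h2
    obtain ⟨ht1, hlt1⟩ := pair_minmax h1.2 (hne p1 hp1)
    obtain ⟨ht2, hlt2⟩ := pair_minmax h2.2 (hne p2 hp2)
    simp only [Prod.mk.injEq] at heq
    obtain ⟨e1, e2, e3, e4⟩ := heq
    have hr1 := parts_two_struct p1 hlt1.ne ht1
    have hr2 := parts_two_struct p2 hlt2.ne ht2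
    apply Nat.Partition.ext
    rw [hr1, hr2, e2, e4, e1, e3]
  · rintro ⟨d, a1, e, a2⟩ hq
    simp only [Finset.mem_filter, mem_QQ] at hq
    obtain ⟨⟨h1, h2, h3, h4, h5⟩, h6⟩ := hq
    have hd0 := vld_pos h1
    have he0 := vld_pos h2
    have hde : d ≠ e := Nat.ne_of_lt h6
    have ha10 : a1 ≠ 0 := by omega
    have ha20 : a2 ≠ 0 := by omega
    have htf : (Multiset.replicate a1 d + Multiset.replicate a2 e).toFinset = {d, e} := by
      rw [Multiset.toFinset_add, Multiset.toFinset_replicate, Multiset.toFinset_replicate,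
        if_neg ha10, if_neg ha20]
      rfl
    have hcd : (Multiset.replicate a1 d + Multiset.replicate a2 e).count d = a1 := by
      rw [Multiset.count_add, Multiset.count_replicate, Multiset.count_replicate,
        if_pos rfl, if_neg (fun h => hde h.symm)]
      omega
    have hce : (Multiset.replicate a1 d + Multiset.replicate a2 e).count e = a2 := by
      rw [Multiset.count_add, Multiset.count_replicate, Multiset.count_replicate,
        if_neg hde, if_pos rfl]
      omega
    refine ⟨⟨Multiset.replicate a1 d + Multiset.replicate a2 e, ?_, ?_⟩, ?_, ?_⟩
    · intro i hi
      rw [Multiset.mem_add] at hi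
      rcases hi with hi | hi <;> rw [Multiset.eq_of_mem_replicate hi]
      · exact hd0
      · exact he0
    · rw [Multiset.sum_add, Multiset.sum_replicate, Multiset.sum_replicate,
        smul_eq_mul, smul_eq_mul]
      exact h5
    · simp only [s2, Finset.mem_filter, Finset.mem_univ, true_and]
      constructor
      · intro i hi
        rw [Multiset.mem_add] at hi
        rcases hi with hi | hi <;> rw [Multiset.eq_of_mem_replicate hi]
        · exact h1
        · exact h2
      · rw [htf]; exact Finset.card_pair hde
    · have hmin : ∀ (H : (Multiset.replicate a1 d + Multiset.replicate a2 e).toFinset.Nonempty),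
          (Multiset.replicate a1 d + Multiset.replicate a2 e).toFinset.min' H = d := by
        intro H
        apply le_antisymm
        · apply Finset.min'_le
          rw [htf]; exact Finset.mem_insert_self d {e}
        · apply Finset.le_min'
          intro y hy
          rw [htf] at hy
          simp only [Finset.mem_insert, Finset.mem_singleton] at hy
          rcases hy with rfl | rfl
          · exact le_refl y
          · exact le_of_lt h6
      have hmax : ∀ (H : (Multiset.replicate a1 d + Multiset.replicate a2 e).toFinset.Nonempty),
          (Multiset.replicate a1 d + Multiset.replicate a2 e).toFinset.max' H = e := by
        intro H
        apply le_antisymm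
        · apply Finset.max'_le
          intro y hy
          rw [htf] at hy
          simp only [Finset.mem_insert, Finset.mem_singleton] at hy
          rcases hy with rfl | rfl
          · exact le_of_lt h6
          · exact le_refl y
        · apply Finset.le_max'
          rw [htf]
          exact Finset.mem_insert_of_mem (Finset.mem_singleton_self e)
      have Hne : (Multiset.replicate a1 d + Multiset.replicate a2 e).toFinset.Nonempty := by
        rw [htf]; exact Finset.insert_nonempty _ _
      exact Prod.ext (hmin Hne) (Prod.ext (by rw [hmin, hcd]) (Prod.ext (hmax Hne)
        (by rw [hmax, hce])))

lemma rbar_counts (N : ℕ) (hN0 : N ≠ 0) :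
    ((Rbar 4 9 N : ℕ) : ZMod 8)
      = 2 * ((s1 N).card : ZMod 8) + 4 * ((s2 N).card : ZMod 8) := by
  unfold Rbar
  push_cast
  have key : ∀ p : Nat.Partition N,
      (if (∀ i ∈ p.parts, ¬ (4:ℕ) ∣ i ∧ ¬ (9:ℕ) ∣ i)
          then ((2:ZMod 8)) ^ (p.parts.toFinset.card) else 0)
      = 2 * (if ((∀ i ∈ p.parts, ¬ (4:ℕ) ∣ i ∧ ¬ (9:ℕ) ∣ i) ∧ p.parts.toFinset.card = 1)
          then (1:ZMod 8) else 0)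
        + 4 * (if ((∀ i ∈ p.parts, ¬ (4:ℕ) ∣ i ∧ ¬ (9:ℕ) ∣ i) ∧ p.parts.toFinset.card = 2)
          then (1:ZMod 8) else 0) := by
    intro p
    by_cases hc : (∀ i ∈ p.parts, ¬ (4:ℕ) ∣ i ∧ ¬ (9:ℕ) ∣ i)
    · rw [if_pos hc]
      have hk0 : p.parts.toFinset.card ≠ 0 := by
        intro h0
        have he : p.parts.toFinset = ∅ := Finset.card_eq_zero.1 h0
        have hp0 : p.parts = 0 := Multiset.toFinset_eq_empty.1 he
        have hps := p.parts_sum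
        rw [hp0] at hps
        simp at hps
        exact hN0 hps.symm
      rcases (by omega : p.parts.toFinset.card = 1 ∨ p.parts.toFinset.card = 2
          ∨ 3 ≤ p.parts.toFinset.card) with h1 | h2 | h3
      · rw [h1, if_pos ⟨hc, rfl⟩, if_neg (by rintro ⟨-, h⟩; omega)]
        decide
      · rw [h2, if_neg (by rintro ⟨-, h⟩; omega), if_pos ⟨hc, rfl⟩]
        decide
      · have h8 : ((2:ZMod 8)) ^ p.parts.toFinset.card = 0 := by
          have h3' : (2:ZMod 8) ^ 3 = 0 := by decide
          have : (2:ZMod 8) ^ p.parts.toFinset.card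
              = (2:ZMod 8) ^ 3 * (2:ZMod 8) ^ (p.parts.toFinset.card - 3) := by
            rw [← pow_add]; congr 1; omega
          rw [this, h3', zero_mul]
        rw [h8, if_neg (by rintro ⟨-, h⟩; omega), if_neg (by rintro ⟨-, h⟩; omega)]
        ring
    · rw [if_neg hc, if_neg (fun h => hc h.1), if_neg (fun h => hc h.1)]
      ring
  rw [Finset.sum_congr rfl (fun p _ => key p), Finset.sum_add_distrib,
    ← Finset.mul_sum, ← Finset.mul_sum, Finset.sum_boole, Finset.sum_boole]
  rfl

theorem Rbar_four_nine_twelve_n_add_three (n : ℕ) : Rbar 4 9 (12 * n + 3) % 8 = 0 := by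
  set N := 12 * n + 3 with hN
  have hN4 : N % 4 = 3 := by omega
  have hN3 : (3:ℕ) ∣ N := ⟨4 * n + 1, by omega⟩
  have hN0 : N ≠ 0 := by omega
  have h8 : (8:ℕ) ∣ Rbar 4 9 N := by
    rw [← ZMod.natCast_eq_zero_iff]
    rw [rbar_counts N hN0, card_s1 N hN0, card_s2 N]
    have e1 := card_QQ_split N
    have e2 := card_QQ_eq_W (show 0 < N by omega)
    have e3 := card_QQ_diag N
    have e4 := diag_add_card N hN0
    obtain ⟨w, hw⟩ := four_dvd_W hN4
    obtain ⟨sg, hsg⟩ := four_dvd_sigma hN3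
    obtain ⟨t, ht⟩ := even_card_dv hN3
    have hdvd : 8 ∣ 2 * (dv N).card + 4 * ((QQ N).filter (fun q => q.1 < q.2.2.1)).card := by
      omega
    have hz : ((2 * (dv N).card + 4 * ((QQ N).filter (fun q => q.1 < q.2.2.1)).card : ℕ)
        : ZMod 8) = 0 := (ZMod.natCast_eq_zero_iff _ 8).2 hdvd
    push_cast at hz
    exact hz
  omega
end

section
/- As formal power series over ℤ, 1/φ(-q) = φ(q)·φ(q^2)^2·φ(q^4)^4·φ(q^8)^8·⋯, where φ(q) = ∑_{k∈ℤ} q^{k^2}. -/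
open scoped Classical

/-- Ramanujan's theta function `φ(q^k) = ∑_{j ∈ ℤ} q^(k·j²)` as a formal power series in `q`. -/
noncomputable def phiPow (k : ℕ) : PowerSeries ℤ :=
  PowerSeries.mk fun m => if m = 0 then 1 else if ∃ j : ℕ, 0 < j ∧ j ^ 2 * k = m then 2 else 0

/-- `φ(-q) = ∑_{j ∈ ℤ} (-1)^j q^(j²)` as a formal power series in `q`. -/
noncomputable def phiNeg : PowerSeries ℤ :=
  PowerSeries.mk fun m =>
    if m = 0 then 1 else if ∃ j : ℕ, 0 < j ∧ j ^ 2 = m then 2 * (-1) ^ Nat.sqrt m else 0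

/-- `φ(-q^k)` as a formal power series in `q`. -/
noncomputable def phiNegPow (k : ℕ) : PowerSeries ℤ :=
  PowerSeries.mk fun m =>
    if m = 0 then 1 else
      if ∃ j : ℕ, 0 < j ∧ j ^ 2 * k = m then 2 * (-1) ^ Nat.sqrt (m / k) else 0

lemma phiNegPow_one : phiNegPow 1 = phiNeg := by
  ext m
  simp [phiNegPow, phiNeg, PowerSeries.coeff_mk]

open Finset PowerSeries

/-- Truncation of `phiPow`. -/
noncomputable def phiT (k n : ℕ) : PowerSeries ℤ :=
  ∑ j ∈ Finset.Icc (-(n : ℤ)) (n : ℤ), PowerSeries.monomial (j.natAbs ^ 2 * k) 1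

/-- Truncation of `phiNegPow`. -/
noncomputable def phiNT (k n : ℕ) : PowerSeries ℤ :=
  ∑ j ∈ Finset.Icc (-(n : ℤ)) (n : ℤ),
    PowerSeries.monomial (j.natAbs ^ 2 * k) ((Int.negOnePow j : ℤ))

lemma pair_eq {k m : ℕ} (hk : 0 < k) {j0 : ℕ} (hj0 : 0 < j0) (hj0m : j0 ^ 2 * k = m)
    {j : ℤ} (h : j.natAbs ^ 2 * k = m) : j = (j0 : ℤ) ∨ j = -(j0 : ℤ) := by
  have h1 : j.natAbs ^ 2 = j0 ^ 2 := by
    have := h.trans hj0m.symm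
    exact Nat.eq_of_mul_eq_mul_right hk this
  have h2 : j.natAbs = j0 := Nat.pow_left_injective (by norm_num) h1
  rcases Int.natAbs_eq j with h3 | h3 <;> [left; right] <;> omega

lemma mem_Icc_of_sq {k n : ℕ} (hk : 0 < k) {j : ℤ} (h : j.natAbs ^ 2 * k ≤ n) :
    j ∈ Finset.Icc (-(n : ℤ)) (n : ℤ) := by
  have h1 : j.natAbs ≤ j.natAbs ^ 2 * k := by
    rcases Nat.eq_zero_or_pos j.natAbs with h0 | h0
    · simp [h0]
    · calc j.natAbs = j.natAbs * 1 * 1 := by ring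
        _ ≤ j.natAbs * j.natAbs * k := by
            exact Nat.mul_le_mul (Nat.mul_le_mul_left _ h0) hk
        _ = j.natAbs ^ 2 * k := by ring
  have h2 : j.natAbs ≤ n := le_trans h1 h
  simp only [Finset.mem_Icc]
  omega

lemma sum_weight_eq {k n m : ℕ} (hk : 0 < k) (hmn : m ≤ n) (w : ℤ → ℤ) :
    (∑ j ∈ Finset.Icc (-(n : ℤ)) (n : ℤ), if j.natAbs ^ 2 * k = m then w j else 0) =
      if m = 0 then w 0 else
        if h : ∃ j : ℕ, 0 < j ∧ j ^ 2 * k = m then w h.choose + w (-(h.choose : ℤ)) else 0 := by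
  by_cases hm : m = 0
  · subst hm
    rw [if_pos rfl, Finset.sum_eq_single (0 : ℤ)]
    · simp [hk.ne']
    · intro j hj hj0
      rw [if_neg]
      intro h
      apply hj0
      have : j.natAbs = 0 := by
        rcases Nat.mul_eq_zero.mp h with h' | h' 
        · exact pow_eq_zero_iff (n := 2) (by norm_num) |>.mp h'
        · omega
      omega
    · intro h
      exact absurd (by simp : (0 : ℤ) ∈ Finset.Icc (-(n : ℤ)) (n : ℤ)) h
  · rw [if_neg hm]
    by_cases hex : ∃ j : ℕ, 0 < j ∧ j ^ 2 * k = m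
    · rw [dif_pos hex]
      obtain ⟨hj0, hj0m⟩ := hex.choose_spec
      set j0 := hex.choose with hj0def
      have hne : (j0 : ℤ) ≠ -(j0 : ℤ) := by omega
      have hmem : ∀ j : ℤ, j.natAbs ^ 2 * k = m → j ∈ Finset.Icc (-(n : ℤ)) (n : ℤ) := by
        intro j h
        exact mem_Icc_of_sq hk (h ▸ hmn)
      rw [← Finset.sum_subset (s₁ := ({(j0 : ℤ), -(j0 : ℤ)} : Finset ℤ))]
      · rw [Finset.sum_pair hne, if_pos, if_pos]
        · simpa using hj0m
        · simpa using hj0m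
      · intro j hj
        simp only [Finset.mem_insert, Finset.mem_singleton] at hj
        rcases hj with rfl | rfl <;> apply hmem <;> simpa using hj0m
      · intro j hj hjp
        rw [if_neg]
        intro h
        exact hjp (by simpa using pair_eq hk hj0 hj0m h)
    · rw [dif_neg hex, Finset.sum_eq_zero]
      intro j hj
      rw [if_neg]
      intro h
      apply hex
      refine ⟨j.natAbs, ?_, h⟩
      rcases Nat.eq_zero_or_pos j.natAbs with h' | h'
      · exfalso; apply hm; rw [← h, h']; ring
      · exact h'

lemma coeff_phiT {k n : ℕ} (hk : 0 < k) {m : ℕ} (hmn : m ≤ n) :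
    PowerSeries.coeff m (phiT k n) = PowerSeries.coeff m (phiPow k) := by
  rw [phiT, map_sum]
  simp only [PowerSeries.coeff_monomial]
  rw [phiPow, PowerSeries.coeff_mk]
  rw [show (∑ j ∈ Finset.Icc (-(n : ℤ)) (n : ℤ),
      if m = j.natAbs ^ 2 * k then (1 : ℤ) else 0) =
      ∑ j ∈ Finset.Icc (-(n : ℤ)) (n : ℤ),
      if j.natAbs ^ 2 * k = m then (1 : ℤ) else 0 by
    exact Finset.sum_congr rfl fun j _ => if_congr eq_comm rfl rfl]
  rw [sum_weight_eq hk hmn]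
  by_cases hm : m = 0
  · simp [hm]
  · rw [if_neg hm, if_neg hm]
    by_cases hex : ∃ j : ℕ, 0 < j ∧ j ^ 2 * k = m
    · rw [dif_pos hex, if_pos hex]; norm_num
    · rw [dif_neg hex, if_neg hex]

lemma coeff_phiNT {k n : ℕ} (hk : 0 < k) {m : ℕ} (hmn : m ≤ n) :
    PowerSeries.coeff m (phiNT k n) = PowerSeries.coeff m (phiNegPow k) := by
  rw [phiNT, map_sum]
  simp only [PowerSeries.coeff_monomial]
  rw [phiNegPow, PowerSeries.coeff_mk]
  rw [show (∑ j ∈ Finset.Icc (-(n : ℤ)) (n : ℤ),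
      if m = j.natAbs ^ 2 * k then ((Int.negOnePow j : ℤ)) else 0) =
      ∑ j ∈ Finset.Icc (-(n : ℤ)) (n : ℤ),
      if j.natAbs ^ 2 * k = m then ((Int.negOnePow j : ℤ)) else 0 by
    exact Finset.sum_congr rfl fun j _ => if_congr eq_comm rfl rfl]
  rw [sum_weight_eq hk hmn]
  by_cases hm : m = 0
  · simp [hm]
  · rw [if_neg hm, if_neg hm]
    by_cases hex : ∃ j : ℕ, 0 < j ∧ j ^ 2 * k = m
    · rw [dif_pos hex, if_pos hex]
      obtain ⟨hj0, hj0m⟩ := hex.choose_spec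
      set j0 := hex.choose
      have hdiv : m / k = j0 ^ 2 := by rw [← hj0m, Nat.mul_div_cancel _ hk]
      rw [hdiv, Nat.sqrt_eq', Int.negOnePow_neg, Int.coe_negOnePow_natCast]
      ring
    · rw [dif_neg hex, if_neg hex]

lemma coeff_mul_congr {f F g G : PowerSeries ℤ} {n : ℕ}
    (hf : ∀ m ≤ n, PowerSeries.coeff m f = PowerSeries.coeff m F)
    (hg : ∀ m ≤ n, PowerSeries.coeff m g = PowerSeries.coeff m G) :
    PowerSeries.coeff n (f * g) = PowerSeries.coeff n (F * G) := by
  rw [PowerSeries.coeff_mul, PowerSeries.coeff_mul]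
  refine Finset.sum_congr rfl fun p hp => ?_
  rw [Finset.HasAntidiagonal.mem_antidiagonal] at hp
  rw [hf p.1 (by omega), hg p.2 (by omega)]

lemma coeff_monomial_mul_monomial (n e e' : ℕ) (a b : ℤ) :
    PowerSeries.coeff n (PowerSeries.monomial e a * PowerSeries.monomial e' b) =
      if e + e' = n then a * b else 0 := by
  rw [PowerSeries.coeff_mul]
  by_cases h : e + e' = n
  · rw [if_pos h, Finset.sum_eq_single_of_mem (e, e') (Finset.HasAntidiagonal.mem_antidiagonal.mpr h)]
    · simp [PowerSeries.coeff_monomial]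
    · intro p hp hpne
      rw [Finset.HasAntidiagonal.mem_antidiagonal] at hp
      simp only [PowerSeries.coeff_monomial]
      rcases eq_or_ne p.1 e with h1 | h1
      · have : p.2 ≠ e' := fun h2 => hpne (Prod.ext h1 h2)
        simp [this]
      · simp [h1]
  · rw [if_neg h, Finset.sum_eq_zero]
    intro p hp
    rw [Finset.HasAntidiagonal.mem_antidiagonal] at hp
    simp only [PowerSeries.coeff_monomial]
    rcases eq_or_ne p.1 e with h1 | h1
    · have : p.2 ≠ e' := by omega
      simp [this]
    · simp [h1]

lemma coeff_sum_mul_sum (n : ℕ) (e e' : ℤ → ℕ) (w w' : ℤ → ℤ) :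
    PowerSeries.coeff n
      ((∑ a ∈ Finset.Icc (-(n : ℤ)) (n : ℤ), PowerSeries.monomial (e a) (w a)) *
       (∑ b ∈ Finset.Icc (-(n : ℤ)) (n : ℤ), PowerSeries.monomial (e' b) (w' b))) =
    ∑ p ∈ Finset.Icc (-(n : ℤ)) (n : ℤ) ×ˢ Finset.Icc (-(n : ℤ)) (n : ℤ),
      if e p.1 + e' p.2 = n then w p.1 * w' p.2 else 0 := by
  rw [Finset.sum_mul_sum, map_sum]
  rw [Finset.sum_product]
  refine Finset.sum_congr rfl fun a _ => ?_
  rw [map_sum]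
  exact Finset.sum_congr rfl fun b _ => coeff_monomial_mul_monomial n (e a) (e' b) (w a) (w' b)

lemma natAbs_cond {a b : ℤ} {k n : ℕ} :
    a.natAbs ^ 2 * k + b.natAbs ^ 2 * k = n ↔ a ^ 2 * (k : ℤ) + b ^ 2 * (k : ℤ) = (n : ℤ) := by
  zify
  rw [sq_abs, sq_abs]

lemma mem_Icc_of_cond {u : ℤ} {k n : ℕ} (hk : 0 < k) (h : u ^ 2 * (k : ℤ) ≤ (n : ℤ)) :
    u ∈ Finset.Icc (-(n : ℤ)) (n : ℤ) := by
  have hk' : (1 : ℤ) ≤ (k : ℤ) := by exact_mod_cast hk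
  simp only [Finset.mem_Icc]
  constructor <;> nlinarith [sq_nonneg (u - 1), sq_nonneg (u + 1), sq_nonneg u]

/-- The core combinatorial identity: `φ(-q^k)·φ(q^k) = φ(-q^{2k})²` at the level of
coefficient sums. -/
lemma core_sum (k n : ℕ) (hk : 0 < k) :
    (∑ p ∈ Finset.Icc (-(n : ℤ)) (n : ℤ) ×ˢ Finset.Icc (-(n : ℤ)) (n : ℤ),
      if p.1.natAbs ^ 2 * k + p.2.natAbs ^ 2 * k = n then ((Int.negOnePow p.1 : ℤ)) * 1 else 0) =
    ∑ p ∈ Finset.Icc (-(n : ℤ)) (n : ℤ) ×ˢ Finset.Icc (-(n : ℤ)) (n : ℤ),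
      if p.1.natAbs ^ 2 * (2 * k) + p.2.natAbs ^ 2 * (2 * k) = n then
        ((Int.negOnePow p.1 : ℤ)) * ((Int.negOnePow p.2 : ℤ)) else 0 := by
  rw [← Finset.sum_filter, ← Finset.sum_filter]
  set A := (Finset.Icc (-(n : ℤ)) (n : ℤ) ×ˢ Finset.Icc (-(n : ℤ)) (n : ℤ)).filter
    (fun p : ℤ × ℤ => p.1.natAbs ^ 2 * k + p.2.natAbs ^ 2 * k = n) with hA
  set B := (Finset.Icc (-(n : ℤ)) (n : ℤ) ×ˢ Finset.Icc (-(n : ℤ)) (n : ℤ)).filter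
    (fun p : ℤ × ℤ => p.1.natAbs ^ 2 * (2 * k) + p.2.natAbs ^ 2 * (2 * k) = n) with hB
  have hk' : (1 : ℤ) ≤ (k : ℤ) := by exact_mod_cast hk
  -- split A into even and odd parts
  rw [← Finset.sum_filter_add_sum_filter_not A (fun p : ℤ × ℤ => (p.1 + p.2) % 2 = 0)]
  have hodd : (∑ p ∈ A.filter (fun p : ℤ × ℤ => ¬(p.1 + p.2) % 2 = 0),
      ((Int.negOnePow p.1 : ℤ)) * 1) = 0 := by
    apply Finset.sum_involution (fun p _ => Prod.swap p)
    · intro p hp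
      simp only [Finset.mem_filter] at hp
      have hpar : ¬(p.1 + p.2) % 2 = 0 := hp.2
      rcases Int.even_or_odd p.1 with he | ho
      · have hbodd : Odd p.2 := by
          rcases Int.even_or_odd p.2 with h2 | h2
          · exfalso; apply hpar; rcases he with ⟨x, hx⟩; rcases h2 with ⟨y, hy⟩; omega
          · exact h2
        simp only [Prod.fst_swap]
        rw [Int.negOnePow_even _ he, Int.negOnePow_odd _ hbodd]
        simp
      · have hbeven : Even p.2 := by
          rcases Int.even_or_odd p.2 with h2 | h2
          · exact h2
          · exfalso; apply hpar; rcases ho with ⟨x, hx⟩; rcases h2 with ⟨y, hy⟩; omega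
        simp only [Prod.fst_swap]
        rw [Int.negOnePow_odd _ ho, Int.negOnePow_even _ hbeven]
        simp
    · intro p hp _
      simp only [Finset.mem_filter] at hp
      intro hswap
      have : p.2 = p.1 := congrArg Prod.fst hswap
      apply hp.2
      omega
    · intro p hp
      simp only [Finset.mem_filter, hA, Finset.mem_product] at hp ⊢
      simp only [Prod.fst_swap, Prod.snd_swap]
      refine ⟨⟨⟨hp.1.1.2, hp.1.1.1⟩, by linarith [hp.1.2]⟩, by omega⟩
    · intro p hp
      rfl
  rw [hodd, add_zero]
  -- bijection between even part of A and B
  apply Finset.sum_nbij' (i := fun p : ℤ × ℤ => ((p.1 + p.2) / 2, (p.1 - p.2) / 2))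
    (j := fun p : ℤ × ℤ => (p.1 + p.2, p.1 - p.2))
  · intro p hp
    simp only [Finset.mem_filter, hA, Finset.mem_product] at hp
    obtain ⟨⟨_, hcond⟩, hpar⟩ := hp
    have hcond' : p.1 ^ 2 * (k : ℤ) + p.2 ^ 2 * (k : ℤ) = (n : ℤ) := natAbs_cond.mp hcond
    have h2 : (2 : ℤ) ∣ (p.1 + p.2) := Int.dvd_of_emod_eq_zero hpar
    have h2' : (2 : ℤ) ∣ (p.1 - p.2) := by omega
    obtain ⟨u, hu⟩ := h2
    obtain ⟨v, hv⟩ := h2'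
    have hu' : (p.1 + p.2) / 2 = u := by omega
    have hv' : (p.1 - p.2) / 2 = v := by omega
    have e1 : p.1 = u + v := by omega
    have e2 : p.2 = u - v := by omega
    have hcondB : u ^ 2 * ((2 : ℤ) * k) + v ^ 2 * ((2 : ℤ) * k) = (n : ℤ) := by
      rw [e1, e2] at hcond'
      linear_combination hcond'
    have hcondB' : u.natAbs ^ 2 * (2 * k) + v.natAbs ^ 2 * (2 * k) = n := by
      rw [natAbs_cond]; push_cast; push_cast at hcondB; linarith
    simp only [Finset.mem_filter, hB, Finset.mem_product, hu', hv']
    refine ⟨⟨?_, ?_⟩, hcondB'⟩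
    · refine mem_Icc_of_cond (k := 2 * k) (by omega) ?_
      push_cast
      nlinarith [sq_nonneg v, hk']
    · refine mem_Icc_of_cond (k := 2 * k) (by omega) ?_
      push_cast
      nlinarith [sq_nonneg u, hk']
  · intro p hp
    simp only [Finset.mem_filter, hB, Finset.mem_product] at hp
    obtain ⟨⟨_, _⟩, hcond⟩ := hp
    have hcond' : p.1 ^ 2 * ((2 : ℤ) * k) + p.2 ^ 2 * ((2 : ℤ) * k) = (n : ℤ) := by
      have := natAbs_cond.mp hcond; push_cast at this ⊢; linarith
    have hcondA : (p.1 + p.2) ^ 2 * (k : ℤ) + (p.1 - p.2) ^ 2 * (k : ℤ) = (n : ℤ) := by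
      linear_combination hcond'
    have hcondA' : (p.1 + p.2).natAbs ^ 2 * k + (p.1 - p.2).natAbs ^ 2 * k = n :=
      natAbs_cond.mpr hcondA
    simp only [Finset.mem_filter, hA, Finset.mem_product]
    refine ⟨⟨⟨?_, ?_⟩, hcondA'⟩, by omega⟩
    · refine mem_Icc_of_cond hk ?_
      nlinarith [sq_nonneg (p.1 - p.2), hk', hcondA]
    · refine mem_Icc_of_cond hk ?_
      nlinarith [sq_nonneg (p.1 + p.2), hk', hcondA]
  · intro p hp
    simp only [Finset.mem_filter] at hp
    have hpar : (p.1 + p.2) % 2 = 0 := hp.2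
    have h1 : (p.1 + p.2) / 2 + (p.1 - p.2) / 2 = p.1 := by omega
    have h2 : (p.1 + p.2) / 2 - (p.1 - p.2) / 2 = p.2 := by omega
    exact Prod.ext h1 h2
  · intro p hp
    have h1 : (p.1 + p.2 + (p.1 - p.2)) / 2 = p.1 := by omega
    have h2 : (p.1 + p.2 - (p.1 - p.2)) / 2 = p.2 := by omega
    exact Prod.ext h1 h2
  · intro p hp
    simp only [Finset.mem_filter] at hp
    have hpar := hp.2
    have h2 : (2 : ℤ) ∣ (p.1 + p.2) := Int.dvd_of_emod_eq_zero hpar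
    obtain ⟨c, hc⟩ := h2
    have hc1 : (p.1 + p.2) / 2 = c := by omega
    have h2' : (2 : ℤ) ∣ (p.1 - p.2) := by omega
    obtain ⟨d, hd⟩ := h2'
    have hd1 : (p.1 - p.2) / 2 = d := by omega
    simp only [hc1, hd1, mul_one]
    have : p.1 = c + d := by omega
    rw [this, Int.negOnePow_add]
    push_cast
    ring

/-- The theta identity `φ(-q^k)·φ(q^k) = φ(-q^{2k})²`. -/
lemma phiNegPow_mul_phiPow (k : ℕ) (hk : 0 < k) :
    phiNegPow k * phiPow k = phiNegPow (2 * k) ^ 2 := by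
  ext n
  have h2k : 0 < 2 * k := by omega
  have h1 : PowerSeries.coeff n (phiNegPow k * phiPow k) =
      PowerSeries.coeff n (phiNT k n * phiT k n) :=
    (coeff_mul_congr (fun m hm => (coeff_phiNT hk hm).symm)
      (fun m hm => (coeff_phiT hk hm).symm))
  have h2 : PowerSeries.coeff n (phiNegPow (2 * k) ^ 2) =
      PowerSeries.coeff n (phiNT (2 * k) n * phiNT (2 * k) n) := by
    rw [pow_two]
    exact coeff_mul_congr (fun m hm => (coeff_phiNT h2k hm).symm)
      (fun m hm => (coeff_phiNT h2k hm).symm)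
  rw [h1, h2]
  simp only [phiNT, phiT]
  rw [coeff_sum_mul_sum, coeff_sum_mul_sum]
  exact core_sum k n hk

lemma prod_eq_phiNegPow (N : ℕ) :
    phiNeg * ∏ i ∈ Finset.range N, phiPow (2 ^ i) ^ (2 ^ i) = phiNegPow (2 ^ N) ^ (2 ^ N) := by
  induction N with
  | zero => simp [phiNegPow_one]
  | succ N ih =>
    rw [Finset.prod_range_succ, ← mul_assoc, ih, ← mul_pow,
      phiNegPow_mul_phiPow _ (Nat.pow_pos (n := N) (by norm_num)), ← pow_mul]
    rw [show 2 * 2 ^ N = 2 ^ (N + 1) from (pow_succ' 2 N).symm]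

lemma coeff_phiNegPow_low {K m : ℕ} (hm : m < K) :
    PowerSeries.coeff m (phiNegPow K) = if m = 0 then 1 else 0 := by
  rw [phiNegPow, PowerSeries.coeff_mk]
  by_cases h : m = 0
  · simp [h]
  · rw [if_neg h, if_neg h, if_neg]
    rintro ⟨j, hj, hjm⟩
    have h1 : 1 ≤ j ^ 2 := Nat.one_le_pow _ _ hj
    have h2 := Nat.mul_le_mul_right K h1
    omega

lemma coeff_pow_low {f : PowerSeries ℤ} {K : ℕ}
    (hf : ∀ i < K, PowerSeries.coeff i f = if i = 0 then 1 else 0) (R : ℕ) :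
    ∀ m < K, PowerSeries.coeff m (f ^ R) = if m = 0 then 1 else 0 := by
  induction R with
  | zero => intro m hm; simp [PowerSeries.coeff_one]
  | succ R ih =>
    intro m hm
    rw [pow_succ, PowerSeries.coeff_mul]
    by_cases h : m = 0
    · subst h
      rw [Finset.Nat.antidiagonal_zero]
      simp [ih 0 hm, hf 0 hm]
    · rw [if_neg h, Finset.sum_eq_zero]
      intro p hp
      rw [Finset.HasAntidiagonal.mem_antidiagonal] at hp
      rw [ih p.1 (by omega), hf p.2 (by omega)]
      rcases eq_or_ne p.1 0 with h1 | h1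
      · have : p.2 ≠ 0 := by omega
        simp [this]
      · simp [h1]

/-- `1/φ(-q) = φ(q) · φ(q²)² · φ(q⁴)⁴ · φ(q⁸)⁸ ⋯` as formal power series over ℤ:
the product converges `q`-adically, and multiplying `φ(-q)` by the partial product
`∏_{i < N} φ(q^(2^i))^(2^i)` gives `1` up to order `q^(2^N)`. -/
theorem one_div_phiNeg_eq_prod_phiPow (N m : ℕ) (hm : m < 2 ^ N) :
    PowerSeries.coeff m
      (phiNeg * ∏ i ∈ Finset.range N, phiPow (2 ^ i) ^ (2 ^ i)) =
    if m = 0 then 1 else 0 := by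
  rw [prod_eq_phiNegPow N]
  exact coeff_pow_low (fun i hi => coeff_phiNegPow_low hi) (2 ^ N) m hm
end
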